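/- arXiv:1603.01200 — 7 statements merged into one kernel-verified Lean document; each statement's English description precedes it below -/
import Mathlib

section
/- For every real α ∈ (1,2], the α-offspring distribution is a probability distribution with mean α/(α−1): one has ∑_{k=2}^∞ θ_α(k) = 1 and ∑_{k=2}^∞ k·θ_α(k) = α/(α−1). -/
open scoped BigOperators
open Finset Filter

/-- The `α`-offspring distribution: `θ_α(0) = θ_α(1) = 0` and
`θ_α(k) = α (2−α)(3−α)⋯(k−1−α) / k!` for `k ≥ 2`. -/
noncomputable def theta (α : ℝ) (k : ℕ) : ℝ :=
  if k < 2 then 0 else α * (∏ j ∈ Finset.Ico 2 k, ((j : ℝ) - α)) / (Nat.factorial k)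

noncomputable def dd (α : ℝ) (n : ℕ) : ℝ :=
  (∏ j ∈ Finset.Ico 2 (n + 1), ((j : ℝ) - α)) / (Nat.factorial n)

lemma dd_one (α : ℝ) : dd α 1 = 1 := by
  simp [dd]

lemma dd_succ (α : ℝ) (n : ℕ) (hn : 1 ≤ n) :
    dd α (n + 1) = dd α n * (((n : ℝ) + 1) - α) / ((n : ℝ) + 1) := by
  have h2 : 2 ≤ n + 1 := by omega
  rw [dd, dd, Finset.prod_Ico_succ_top h2, Nat.factorial_succ]
  push_cast
  rw [div_mul_eq_mul_div, div_div, mul_comm ((n : ℝ) + 1) ((Nat.factorial n : ℝ))]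

lemma dd_nonneg (α : ℝ) (hα2 : α ≤ 2) (n : ℕ) : 0 ≤ dd α n := by
  apply div_nonneg _ (by positivity)
  apply Finset.prod_nonneg
  intro j hj
  have : 2 ≤ j := (Finset.mem_Ico.mp hj).1
  have : (2 : ℝ) ≤ j := by exact_mod_cast this
  linarith

lemma theta_nonneg (α : ℝ) (hα1 : 1 < α) (hα2 : α ≤ 2) (k : ℕ) : 0 ≤ theta α k := by
  unfold theta
  split
  · exact le_rfl
  · apply div_nonneg _ (by positivity)
    apply mul_nonneg (by linarith)
    apply Finset.prod_nonneg
    intro j hj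
    have : 2 ≤ j := (Finset.mem_Ico.mp hj).1
    have : (2 : ℝ) ≤ j := by exact_mod_cast this
    linarith

lemma theta_eq (α : ℝ) (k : ℕ) (hk : 1 ≤ k) :
    theta α (k + 1) = α * dd α k / ((k : ℝ) + 1) := by
  have h2 : ¬ (k + 1 < 2) := by omega
  rw [theta, if_neg h2, dd, Nat.factorial_succ]
  push_cast
  rw [← mul_div_assoc, div_div, mul_comm ((k : ℝ) + 1) ((Nat.factorial k : ℝ))]

lemma theta_telescope (α : ℝ) (k : ℕ) (hk : 1 ≤ k) :
    theta α (k + 1) = dd α k - dd α (k + 1) := by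
  rw [theta_eq α k hk, dd_succ α k hk]
  have h3 : (k : ℝ) + 1 ≠ 0 := by positivity
  field_simp
  ring

lemma sum_theta (α : ℝ) (n : ℕ) :
    ∑ k ∈ Finset.range (n + 2), theta α k = 1 - dd α (n + 1) := by
  induction n with
  | zero => norm_num [theta, dd_one, Finset.sum_range_succ]
  | succ m ih =>
      rw [Finset.sum_range_succ, ih, theta_telescope α (m + 1) (by omega)]
      ring

lemma sum_mul_theta (α : ℝ) (hα1 : 1 < α) (n : ℕ) :
    ∑ k ∈ Finset.range (n + 2), (k : ℝ) * theta α k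
      = α / (α - 1) - α * ((n : ℝ) + 1) * dd α (n + 1) / (α - 1) := by
  have hα : α - 1 ≠ 0 := by linarith
  induction n with
  | zero =>
      norm_num [theta, dd_one, Finset.sum_range_succ]
  | succ m ih =>
      rw [Finset.sum_range_succ, ih, theta_eq α (m + 1) (by omega),
        dd_succ α (m + 1) (by omega)]
      have h3 : (m : ℝ) + 1 + 1 ≠ 0 := by positivity
      push_cast
      field_simp
      ring

lemma a_le_exp (α : ℝ) (hα1 : 1 < α) (hα2 : α ≤ 2) (n : ℕ) :
    ((n : ℝ) + 1) * dd α (n + 1)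
      ≤ Real.exp (-(α - 1) * ∑ j ∈ Finset.range n, (1 / ((j : ℝ) + 1))) := by
  induction n with
  | zero => simp [dd_one]
  | succ m ih =>
      have hm1 : (0 : ℝ) < (m : ℝ) + 1 := by positivity
      have key : ((m : ℝ) + 1 + 1) * dd α (m + 1 + 1)
          = (((m : ℝ) + 1) * dd α (m + 1)) * ((((m : ℝ) + 1 + 1) - α) / ((m : ℝ) + 1)) := by
        rw [dd_succ α (m + 1) (by omega)]
        push_cast
        have h3 : (m : ℝ) + 1 + 1 ≠ 0 := by positivity
        field_simp
      push_cast
      rw [key]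
      have hfac0 : 0 ≤ (((m : ℝ) + 1 + 1) - α) / ((m : ℝ) + 1) := by
        apply div_nonneg _ (le_of_lt hm1)
        linarith
      have hfac : (((m : ℝ) + 1 + 1) - α) / ((m : ℝ) + 1)
          ≤ Real.exp (-(α - 1) / ((m : ℝ) + 1)) := by
        have h1 : (((m : ℝ) + 1 + 1) - α) / ((m : ℝ) + 1)
            = 1 + (-(α - 1) / ((m : ℝ) + 1)) := by field_simp; ring
        rw [h1, add_comm]
        exact Real.add_one_le_exp _
      have ha0 : 0 ≤ ((m : ℝ) + 1) * dd α (m + 1) :=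
        mul_nonneg (by positivity) (dd_nonneg α hα2 _)
      calc (((m : ℝ) + 1) * dd α (m + 1)) * ((((m : ℝ) + 1 + 1) - α) / ((m : ℝ) + 1))
          ≤ Real.exp (-(α - 1) * ∑ j ∈ Finset.range m, (1 / ((j : ℝ) + 1)))
              * Real.exp (-(α - 1) / ((m : ℝ) + 1)) := by
            apply mul_le_mul ih hfac hfac0 (Real.exp_nonneg _)
        _ = Real.exp (-(α - 1) * ∑ j ∈ Finset.range (m + 1), (1 / ((j : ℝ) + 1))) := by
            rw [← Real.exp_add, Finset.sum_range_succ]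
            congr 1
            ring

lemma tendsto_a (α : ℝ) (hα1 : 1 < α) (hα2 : α ≤ 2) :
    Tendsto (fun n : ℕ => ((n : ℝ) + 1) * dd α (n + 1)) atTop (nhds 0) := by
  have hexp : Tendsto (fun n : ℕ =>
      Real.exp (-(α - 1) * ∑ j ∈ Finset.range n, (1 / ((j : ℝ) + 1)))) atTop (nhds 0) := by
    apply Real.tendsto_exp_atBot.comp
    have hH := Real.tendsto_sum_range_one_div_nat_succ_atTop
    have := hH.const_mul_atTop (show (0:ℝ) < α - 1 by linarith)
    have h2 : Tendsto (fun n : ℕ =>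
        (α - 1) * ∑ j ∈ Finset.range n, (1 / ((j : ℝ) + 1))) atTop atTop := this
    have h3 : Tendsto (fun n : ℕ =>
        -((α - 1) * ∑ j ∈ Finset.range n, (1 / ((j : ℝ) + 1)))) atTop atBot :=
      tendsto_neg_atTop_atBot.comp h2
    convert h3 using 2 with n
    ring
  apply squeeze_zero (fun n => mul_nonneg (by positivity) (dd_nonneg α hα2 _))
    (fun n => a_le_exp α hα1 hα2 n) hexp

lemma tendsto_d (α : ℝ) (hα1 : 1 < α) (hα2 : α ≤ 2) :
    Tendsto (fun n : ℕ => dd α (n + 1)) atTop (nhds 0) := by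
  apply squeeze_zero (fun n => dd_nonneg α hα2 _) _ (tendsto_a α hα1 hα2)
  intro n
  have h0 : 0 ≤ dd α (n + 1) := dd_nonneg α hα2 _
  nlinarith [Nat.cast_nonneg (α := ℝ) n]

/-- For `α ∈ (1,2]`, `θ_α` is a probability distribution with mean `α/(α−1)`. -/
theorem stmt_1 (α : ℝ) (hα1 : 1 < α) (hα2 : α ≤ 2) :
    (∑' k : ℕ, theta α k = 1) ∧ (∑' k : ℕ, (k : ℝ) * theta α k = α / (α - 1)) := by
  have hα : 0 < α - 1 := by linarith
  -- limits of shifted partial sums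
  have hlim1 : Tendsto (fun n : ℕ => ∑ k ∈ Finset.range (n + 2), theta α k) atTop (nhds 1) := by
    simp only [sum_theta]
    have := (tendsto_d α hα1 hα2).const_sub 1
    simpa using this
  have hlim2 : Tendsto (fun n : ℕ => ∑ k ∈ Finset.range (n + 2), (k : ℝ) * theta α k)
      atTop (nhds (α / (α - 1))) := by
    simp only [sum_mul_theta α hα1]
    have h1 : Tendsto (fun n : ℕ => α * (((n : ℝ) + 1) * dd α (n + 1)) / (α - 1))
        atTop (nhds 0) := by
      have := ((tendsto_a α hα1 hα2).const_mul α).div_const (α - 1)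
      simpa using this
    have := h1.const_sub (α / (α - 1))
    simp only [sub_zero] at this
    convert this using 2 with n
    ring
  have hlim1' : Tendsto (fun n : ℕ => ∑ k ∈ Finset.range n, theta α k) atTop (nhds 1) :=
    (tendsto_add_atTop_iff_nat 2).mp hlim1
  have hlim2' : Tendsto (fun n : ℕ => ∑ k ∈ Finset.range n, (k : ℝ) * theta α k)
      atTop (nhds (α / (α - 1))) :=
    (tendsto_add_atTop_iff_nat 2).mp hlim2
  have hs1 : Summable (fun k : ℕ => theta α k) := by
    apply summable_of_sum_range_le (c := 1) (theta_nonneg α hα1 hα2)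
    intro n
    match n with
    | 0 => simp
    | 1 => simp [theta]
    | (m + 2) =>
        rw [sum_theta]
        have := dd_nonneg α hα2 (m + 1)
        linarith
  have hs2 : Summable (fun k : ℕ => (k : ℝ) * theta α k) := by
    apply summable_of_sum_range_le (c := α / (α - 1))
      (fun k => mul_nonneg (Nat.cast_nonneg k) (theta_nonneg α hα1 hα2 k))
    intro n
    match n with
    | 0 => simp; positivity
    | 1 => simp [theta]; positivity
    | (m + 2) =>
        rw [sum_mul_theta α hα1]
        have h0 : 0 ≤ α * ((m : ℝ) + 1) * dd α (m + 1) / (α - 1) := by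
          apply div_nonneg _ (le_of_lt hα)
          have h1 : 0 ≤ dd α (m + 1) := dd_nonneg α hα2 (m + 1)
          have h2 : (0:ℝ) ≤ (m:ℝ) + 1 := by positivity
          exact mul_nonneg (mul_nonneg (by linarith) h2) h1
        linarith
  constructor
  · exact tendsto_nhds_unique hs1.hasSum.tendsto_sum_nat hlim1'
  · exact tendsto_nhds_unique hs2.hasSum.tendsto_sum_nat hlim2'
end

section
/- For every real α ∈ (1,2] and every r ∈ (0,1], the generating function of the size-biased α-offspring distribution satisfies ((α−1)/α)·∑_{k=2}^∞ k·θ_α(k)·r^k = r − r·(1−r)^{α−1}. -/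
open scoped BigOperators

namespace Stmt2Aux

open Finset Filter Topology

/-- `c β n = ∏_{j=1}^n (j - β) / n!`, the coefficients of the binomial series for
`(1 - x)^(β - 1)`. -/
noncomputable def c (β : ℝ) (n : ℕ) : ℝ :=
  (∏ j ∈ Finset.range n, ((j : ℝ) + 1 - β)) / (Nat.factorial n)

lemma c_zero (β : ℝ) : c β 0 = 1 := by simp [c]

lemma c_succ (β : ℝ) (n : ℕ) :
    c β (n + 1) = c β n * (((n : ℝ) + 1 - β) / ((n : ℝ) + 1)) := by
  simp only [c, Finset.prod_range_succ, Nat.factorial_succ, Nat.cast_mul, Nat.cast_add,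
    Nat.cast_one]
  rw [div_mul_div_comm, mul_comm ((Nat.factorial n : ℝ)) ((n:ℝ) + 1)]

lemma c_nonneg {β : ℝ} (hβ1 : β ≤ 1) (n : ℕ) : 0 ≤ c β n := by
  induction n with
  | zero => simp [c_zero]
  | succ n ih =>
    rw [c_succ]
    have h1 : (0:ℝ) ≤ (n : ℝ) + 1 - β := by
      have : (0:ℝ) ≤ (n:ℝ) := Nat.cast_nonneg n
      linarith
    have h2 : (0:ℝ) < (n : ℝ) + 1 := by positivity
    positivity

lemma c_succ_le {β : ℝ} (hβ0 : 0 ≤ β) (hβ1 : β ≤ 1) (n : ℕ) : c β (n + 1) ≤ c β n := by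
  rw [c_succ]
  have h2 : (0:ℝ) < (n : ℝ) + 1 := by positivity
  have hq : ((n : ℝ) + 1 - β) / ((n : ℝ) + 1) ≤ 1 := by
    rw [div_le_one h2]; linarith
  calc c β n * (((n : ℝ) + 1 - β) / ((n : ℝ) + 1)) ≤ c β n * 1 :=
        mul_le_mul_of_nonneg_left hq (c_nonneg hβ1 n)
    _ = c β n := mul_one _

lemma c_le_one {β : ℝ} (hβ0 : 0 ≤ β) (hβ1 : β ≤ 1) (n : ℕ) : c β n ≤ 1 := by
  induction n with
  | zero => simp [c_zero]
  | succ n ih => exact le_trans (c_succ_le hβ0 hβ1 n) ih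

lemma c_succ_mul (β : ℝ) (n : ℕ) :
    ((n : ℝ) + 1) * c β (n + 1) = ((n : ℝ) + 1 - β) * c β n := by
  have hn : ((n : ℝ) + 1) ≠ 0 := by positivity
  rw [c_succ]
  field_simp

set_option maxHeartbeats 2000000 in
/-- The binomial series: for `0 ≤ β ≤ 1` and `0 ≤ r < 1`,
`∑ c β n r^n = (1-r)^(β-1)`. -/
lemma hasSum_binomial {β : ℝ} (hβ0 : 0 ≤ β) (hβ1 : β ≤ 1) {r : ℝ}
    (hr0 : 0 ≤ r) (hr1 : r < 1) :
    HasSum (fun n : ℕ => c β n * r ^ n) ((1 - r) ^ (β - 1)) := by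
  set ρ : ℝ := (1 + r) / 2 with hρdef
  have hρ0 : 0 < ρ := by positivity
  have hρ1 : ρ < 1 := by rw [hρdef]; linarith
  have hrρ : r < ρ := by rw [hρdef]; linarith
  set t : Set ℝ := Set.Ioo (-ρ) ρ with htdef
  have ht : IsOpen t := isOpen_Ioo
  have htc : IsPreconnected t := (convex_Ioo _ _).isPreconnected
  have hmem0 : (0:ℝ) ∈ t := ⟨by linarith, hρ0⟩
  have hmemr : r ∈ t := ⟨by linarith, hrρ⟩
  have habs : ∀ y ∈ t, |y| ≤ ρ := by
    intro y hy
    rw [abs_le]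
    exact ⟨hy.1.le, hy.2.le⟩
  have hcabs : ∀ n, |c β n| ≤ 1 := fun n => by
    rw [abs_of_nonneg (c_nonneg hβ1 n)]; exact c_le_one hβ0 hβ1 n
  -- summable bound
  have hu : Summable (fun n : ℕ => (n : ℝ) * ρ ^ (n - 1)) := by
    have h1 : Summable (fun n : ℕ => (n : ℝ) * ρ ^ n) := by
      have := summable_pow_mul_geometric_of_norm_lt_one (R := ℝ) 1
        (r := ρ) (by rwa [Real.norm_eq_abs, abs_of_pos hρ0])
      simpa using this
    refine Summable.of_nonneg_of_le (fun n => ?_) (fun n => ?_) (h1.mul_left ρ⁻¹)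
    · exact mul_nonneg (Nat.cast_nonneg n) (pow_nonneg hρ0.le _)
    · cases n with
      | zero => simp
      | succ n =>
        apply le_of_eq
        have hρne : ρ ≠ 0 := ne_of_gt hρ0
        simp only [Nat.add_sub_cancel, pow_succ]
        field_simp
  set g : ℕ → ℝ → ℝ := fun n y => c β n * y ^ n with hgdef
  set g' : ℕ → ℝ → ℝ := fun n y => c β n * ((n : ℝ) * y ^ (n - 1)) with hg'def
  have hg : ∀ n : ℕ, ∀ y ∈ t, HasDerivAt (g n) (g' n y) y := by
    intro n y _
    exact (hasDerivAt_pow n y).const_mul (c β n)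
  have hg' : ∀ n : ℕ, ∀ y ∈ t, ‖g' n y‖ ≤ (n : ℝ) * ρ ^ (n - 1) := by
    intro n y hy
    have h1 : |y ^ (n-1)| ≤ ρ ^ (n-1) := by
      rw [abs_pow]
      exact pow_le_pow_left₀ (abs_nonneg y) (habs y hy) _
    calc ‖g' n y‖ = |c β n| * ((n:ℝ) * |y ^ (n-1)|) := by
          simp [hg'def, abs_mul, Real.norm_eq_abs, Nat.abs_cast]
      _ ≤ 1 * ((n:ℝ) * ρ ^ (n-1)) := by
          apply mul_le_mul (hcabs n) _ (by positivity) zero_le_one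
          exact mul_le_mul_of_nonneg_left h1 (Nat.cast_nonneg n)
      _ = (n : ℝ) * ρ ^ (n - 1) := one_mul _
  have hg0 : Summable (fun n => g n 0) := by
    apply summable_of_ne_finset_zero (s := {0})
    intro n hn
    simp only [Finset.mem_singleton] at hn
    simp [hgdef, zero_pow hn]
  have hfs : ∀ y ∈ t, Summable (fun n => g n y) := by
    intro y hy
    apply Summable.of_norm
    refine Summable.of_nonneg_of_le (fun n => norm_nonneg _) (fun n => ?_)
      (summable_geometric_of_lt_one hρ0.le hρ1)
    calc ‖g n y‖ = |c β n| * |y| ^ n := by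
          simp [hgdef, abs_mul, abs_pow, Real.norm_eq_abs]
      _ ≤ 1 * ρ ^ n :=
          mul_le_mul (hcabs n) (pow_le_pow_left₀ (abs_nonneg y) (habs y hy) n)
            (by positivity) zero_le_one
      _ = ρ ^ n := one_mul _
  have hDs : ∀ y ∈ t, Summable (fun n => g' n y) := by
    intro y hy
    apply Summable.of_norm
    exact Summable.of_nonneg_of_le (fun n => norm_nonneg _) (fun n => hg' n y hy) hu
  set f : ℝ → ℝ := fun y => ∑' n, g n y with hfdef
  have hderiv : ∀ y ∈ t, HasDerivAt f (∑' n, g' n y) y := by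
    intro y hy
    exact hasDerivAt_tsum_of_isPreconnected hu ht htc hg hg' hmem0 hg0 hy
  -- the ODE relation: (1 - y) * D y = (1 - β) * f y
  have hode : ∀ y ∈ t, (1 - y) * (∑' n, g' n y) = (1 - β) * f y := by
    intro y hy
    set D : ℝ := ∑' n, g' n y with hDdef
    have hD : HasSum (fun n => g' n y) D := (hDs y hy).hasSum
    have h1 : HasSum (fun n => g' (n + 1) y) D := by
      apply (hasSum_nat_add_iff (f := fun k => g' k y) 1).mpr
      simpa [hg'def] using hD
    have h2 : HasSum (fun n => y * g' n y) (y * D) := hD.mul_left y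
    have h3 := h1.sub h2
    have hterm : ∀ n : ℕ, g' (n + 1) y - y * g' n y = (1 - β) * (c β n * y ^ n) := by
      intro n
      cases n with
      | zero =>
        have h := c_succ_mul β 0
        simp only [Nat.cast_zero, zero_add, one_mul, c_zero, mul_one] at h
        simp [hg'def, h, c_zero]
      | succ m =>
        have h := c_succ_mul β (m + 1)
        simp only [hg'def, Nat.add_sub_cancel]
        push_cast at h ⊢
        linear_combination (y ^ (m + 1)) * h
    rw [funext hterm] at h3
    have h5 : HasSum (fun n => (1 - β) * (c β n * y ^ n)) ((1 - β) * f y) :=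
      (hfs y hy).hasSum.mul_left (1 - β)
    have h6 := h3.unique h5
    linarith [h6]
  -- constancy of F y = f y * (1-y)^(1-β)
  set F : ℝ → ℝ := fun y => f y * (1 - y) ^ (1 - β) with hFdef
  have hF : ∀ y ∈ t, HasDerivAt F 0 y := by
    intro y hy
    have hy2 : y < ρ := hy.2
    have hy1 : (0:ℝ) < 1 - y := by linarith
    have hP : HasDerivAt (fun z : ℝ => (1 - z) ^ (1 - β))
        ((1 - β) * (1 - y) ^ (1 - β - 1) * (-1)) y := by
      have h1 : HasDerivAt (fun z : ℝ => 1 - z) (-1) y := by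
        simpa using (hasDerivAt_id y).const_sub 1
      have h2 := Real.hasDerivAt_rpow_const (x := 1 - y) (p := 1 - β)
        (Or.inl (ne_of_gt hy1))
      exact h2.comp y h1
    have hprod := (hderiv y hy).mul hP
    have hkey : (∑' n, g' n y) * (1 - y) ^ (1 - β)
        + f y * ((1 - β) * (1 - y) ^ (1 - β - 1) * (-1)) = 0 := by
      have he : (1 - y) ^ (1 - β) = (1 - y) ^ (1 - β - 1) * (1 - y) := by
        rw [← Real.rpow_add_one (ne_of_gt hy1)]
        ring_nf
      rw [he]
      have ho := hode y hy
      linear_combination ((1 - y) ^ (1 - β - 1)) * ho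
    rw [hkey] at hprod
    exact hprod
  have hdiff : DifferentiableOn ℝ F t := fun y hy =>
    (hF y hy).differentiableAt.differentiableWithinAt
  have hfd : ∀ y ∈ t, fderivWithin ℝ F t y = 0 := by
    intro y hy
    have h0 : HasFDerivAt F (0 : ℝ →L[ℝ] ℝ) y := by
      have h := hF y hy
      rw [hasDerivAt_iff_hasFDerivAt] at h
      rw [ContinuousLinearMap.toSpanSingleton_zero] at h
      exact h
    rw [fderivWithin_of_isOpen ht hy]
    exact h0.fderiv
  have hconst : F r = F 0 :=
    (convex_Ioo _ _).is_const_of_fderivWithin_eq_zero hdiff hfd hmemr hmem0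
  have hf0 : f 0 = 1 := by
    have he : f 0 = ∑' n, g n 0 := rfl
    rw [he, tsum_eq_single 0 (fun n hn => by simp [hgdef, zero_pow hn])]
    simp [hgdef, c_zero]
  have hF0 : F 0 = 1 := by
    simp [hFdef, hf0, Real.one_rpow]
  rw [hF0] at hconst
  have h1r : (0:ℝ) < 1 - r := by linarith
  have hconst' : f r * (1 - r) ^ (1 - β) = 1 := hconst
  have hpos : (0:ℝ) < (1 - r) ^ (1 - β) := Real.rpow_pos_of_pos h1r _
  have hfr : f r = (1 - r) ^ (β - 1) := by
    have h1 : f r = 1 / ((1 - r) ^ (1 - β)) := (eq_div_iff (ne_of_gt hpos)).mpr hconst'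
    rw [h1, one_div, ← Real.rpow_neg h1r.le]
    congr 1
    ring
  have hfin : HasSum (fun n => c β n * r ^ n) (f r) := (hfs r hmemr).hasSum
  rw [hfr] at hfin
  exact hfin

lemma c_eq_prod (β : ℝ) (n : ℕ) :
    c β n = ∏ j ∈ Finset.range n, (1 - β / ((j : ℝ) + 1)) := by
  induction n with
  | zero => simp [c_zero]
  | succ n ih =>
    rw [c_succ, ih, Finset.prod_range_succ]
    congr 1
    have hn : ((n : ℝ) + 1) ≠ 0 := by positivity
    field_simp

lemma c_tendsto_zero {β : ℝ} (hβ0 : 0 < β) (hβ1 : β ≤ 1) :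
    Tendsto (c β) atTop (𝓝 0) := by
  have hbound : ∀ n, c β n ≤ Real.exp (-β * ∑ j ∈ Finset.range n, 1 / ((j : ℝ) + 1)) := by
    intro n
    rw [c_eq_prod]
    have h1 : ∏ j ∈ Finset.range n, (1 - β / ((j : ℝ) + 1))
        ≤ ∏ j ∈ Finset.range n, Real.exp (-(β / ((j : ℝ) + 1))) := by
      apply Finset.prod_le_prod
      · intro j _
        have hj : (0:ℝ) < (j:ℝ) + 1 := by positivity
        have h2 : β / ((j:ℝ) + 1) ≤ 1 := by
          rw [div_le_one hj]
          have : (0:ℝ) ≤ (j:ℝ) := Nat.cast_nonneg j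
          linarith
        linarith
      · intro j _
        have := Real.add_one_le_exp (-(β / ((j : ℝ) + 1)))
        linarith
    rw [← Real.exp_sum] at h1
    have h2 : -β * ∑ j ∈ Finset.range n, 1 / ((j : ℝ) + 1)
        = ∑ j ∈ Finset.range n, -(β / ((j : ℝ) + 1)) := by
      rw [Finset.mul_sum]
      apply Finset.sum_congr rfl
      intro j _
      ring
    rw [h2]
    exact h1
  have htend : Tendsto (fun n => Real.exp (-β * ∑ j ∈ Finset.range n, 1 / ((j : ℝ) + 1)))
      atTop (𝓝 0) := by
    apply Real.tendsto_exp_atBot.comp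
    apply Tendsto.const_mul_atTop_of_neg (by linarith : -β < 0)
    exact Real.tendsto_sum_range_one_div_nat_succ_atTop
  exact squeeze_zero (fun n => c_nonneg hβ1 n) hbound htend

lemma hasSum_telescope {β : ℝ} (hβ0 : 0 < β) (hβ1 : β ≤ 1) :
    HasSum (fun n : ℕ => c β n - c β (n + 1)) 1 := by
  rw [hasSum_iff_tendsto_nat_of_nonneg
    (fun n => by linarith [c_succ_le hβ0.le hβ1 n])]
  have hsum : ∀ n : ℕ, ∑ i ∈ Finset.range n, (c β i - c β (i + 1)) = 1 - c β n := by
    intro n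
    rw [Finset.sum_range_sub' (c β) n, c_zero]
  simp_rw [hsum]
  have h := (c_tendsto_zero hβ0 hβ1).const_sub 1
  simpa using h

end Stmt2Aux

open Stmt2Aux Finset Filter Topology

/-- For `α ∈ (1,2]` and `r ∈ (0,1]`, the generating function of the size-biased
`α`-offspring distribution satisfies
`((α−1)/α) ∑_{k≥2} k θ_α(k) r^k = r − r (1−r)^{α−1}`. -/
theorem stmt_2 (α r : ℝ) (hα1 : 1 < α) (hα2 : α ≤ 2) (hr0 : 0 < r) (hr1 : r ≤ 1) :
    ((α - 1) / α) * ∑' k : ℕ, (k : ℝ) * theta α k * r ^ k = r - r * (1 - r) ^ (α - 1) := by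
  have hβ0 : (0:ℝ) < α - 1 := by linarith
  have hβ1 : α - 1 ≤ 1 := by linarith
  have hαne : α ≠ 0 := ne_of_gt (by linarith)
  have hβne : α - 1 ≠ 0 := ne_of_gt hβ0
  -- key HasSum
  have key : HasSum (fun n : ℕ => (c (α-1) n - c (α-1) (n + 1)) * r ^ (n + 2))
      (r - r * (1 - r) ^ (α - 1)) := by
    rcases eq_or_lt_of_le hr1 with h1 | h1
    · -- r = 1
      subst h1
      have h0 : ((1:ℝ) - 1) ^ (α - 1) = 0 := by
        rw [sub_self]
        exact Real.zero_rpow (by linarith)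
      rw [h0]
      simpa using hasSum_telescope hβ0 hβ1
    · -- r < 1
      have hb := hasSum_binomial hβ0.le hβ1 hr0.le h1
      have h2 : HasSum (fun n : ℕ => c (α-1) n * r ^ (n + 2))
          (r ^ 2 * (1 - r) ^ (α - 1 - 1)) := by
        have h := hb.mul_left (r ^ 2)
        have he : (fun n : ℕ => r ^ 2 * (c (α-1) n * r ^ n))
            = fun n : ℕ => c (α-1) n * r ^ (n + 2) := by
          funext n; ring
        rwa [he] at h
      have h3 : HasSum (fun n : ℕ => c (α-1) (n + 1) * r ^ (n + 1))
          ((1 - r) ^ (α - 1 - 1) - 1) := by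
        apply (hasSum_nat_add_iff (f := fun k : ℕ => c (α-1) k * r ^ k) 1).mpr
        have he : (1 - r) ^ (α - 1 - 1) - 1
            + ∑ i ∈ Finset.range 1, c (α-1) i * r ^ i = (1 - r) ^ (α - 1 - 1) := by
          simp [c_zero]
        rw [he]
        exact hb
      have h4 : HasSum (fun n : ℕ => c (α-1) (n + 1) * r ^ (n + 2))
          (r * ((1 - r) ^ (α - 1 - 1) - 1)) := by
        have h := h3.mul_left r
        have he : (fun n : ℕ => r * (c (α-1) (n + 1) * r ^ (n + 1)))
            = fun n : ℕ => c (α-1) (n + 1) * r ^ (n + 2) := by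
          funext n; ring
        rwa [he] at h
      have h5 := h2.sub h4
      have h1r : (0:ℝ) < 1 - r := by linarith
      have hrw : (1 - r) * (1 - r) ^ (α - 1 - 1) = (1 - r) ^ (α - 1) := by
        have he : (1 - r) ^ (α - 1) = (1 - r) ^ (α - 1 - 1 + 1) := by
          congr 1; ring
        rw [he, Real.rpow_add_one (ne_of_gt h1r)]
        ring
      have hval : r ^ 2 * (1 - r) ^ (α - 1 - 1) - r * ((1 - r) ^ (α - 1 - 1) - 1)
          = r - r * (1 - r) ^ (α - 1) := by
        rw [← hrw]
        ring
      rw [hval] at h5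
      have he : (fun n : ℕ => c (α-1) n * r ^ (n + 2) - c (α-1) (n + 1) * r ^ (n + 2))
          = fun n : ℕ => (c (α-1) n - c (α-1) (n + 1)) * r ^ (n + 2) := by
        funext n; ring
      rwa [he] at h5
  -- termwise identity
  have hterm : ∀ n : ℕ, (((n + 2 : ℕ)) : ℝ) * theta α (n + 2) * r ^ (n + 2)
      = (α / (α - 1)) * ((c (α-1) n - c (α-1) (n + 1)) * r ^ (n + 2)) := by
    intro n
    have hθ : theta α (n + 2) = α * (∏ j ∈ Finset.range n, ((j : ℝ) + 2 - α))
        / (Nat.factorial (n + 2)) := by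
      rw [theta, if_neg (by omega)]
      congr 2
      rw [Finset.prod_Ico_eq_prod_range]
      apply Finset.prod_congr (by norm_num) (fun j _ => by push_cast; ring)
    have hcn : c (α-1) n = (∏ j ∈ Finset.range n, ((j : ℝ) + 2 - α)) / (Nat.factorial n) := by
      rw [c]
      congr 1
      apply Finset.prod_congr rfl (fun j _ => by ring)
    have hcn1 : c (α-1) (n + 1) = ((∏ j ∈ Finset.range n, ((j : ℝ) + 2 - α))
        * ((n : ℝ) + 2 - α)) / (Nat.factorial (n + 1)) := by
      rw [c, Finset.prod_range_succ]
      congr 1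
      congr 1
      · apply Finset.prod_congr rfl (fun j _ => by ring)
      · ring
    have hfn : (0:ℝ) < (Nat.factorial n : ℝ) := by
      exact_mod_cast Nat.factorial_pos n
    have hfn1 : ((Nat.factorial (n+1) : ℕ) : ℝ) = ((n:ℝ) + 1) * (Nat.factorial n) := by
      rw [Nat.factorial_succ]; push_cast; ring
    have hfn2 : ((Nat.factorial (n+2) : ℕ) : ℝ)
        = ((n:ℝ) + 2) * (((n:ℝ) + 1) * (Nat.factorial n)) := by
      rw [Nat.factorial_succ, Nat.factorial_succ]; push_cast; ring
    rw [hθ, hcn, hcn1, hfn1, hfn2]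
    push_cast
    have hn1 : ((n:ℝ) + 1) ≠ 0 := by positivity
    have hn2 : ((n:ℝ) + 2) ≠ 0 := by positivity
    field_simp
    ring
  -- conclude
  have key2 : HasSum (fun n : ℕ => (((n + 2 : ℕ)) : ℝ) * theta α (n + 2) * r ^ (n + 2))
      ((α / (α - 1)) * (r - r * (1 - r) ^ (α - 1))) := by
    rw [funext hterm]
    exact key.mul_left _
  have key3 : HasSum (fun k : ℕ => (k : ℝ) * theta α k * r ^ k)
      ((α / (α - 1)) * (r - r * (1 - r) ^ (α - 1))) := by
    have h := (hasSum_nat_add_iff (f := fun k : ℕ => (k : ℝ) * theta α k * r ^ k) 2).mp key2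
    have hz : ∑ i ∈ Finset.range 2, ((i : ℝ) * theta α i * r ^ i) = 0 := by
      simp [Finset.sum_range_succ, theta]
    rw [hz, add_zero] at h
    exact h
  rw [key3.tsum_eq]
  field_simp
end

section
/- For every real α ∈ (1,2] and every integer k ≥ 3, the tail of the size-biased α-offspring distribution satisfies ((α−1)/α)·∑_{j=k}^∞ j·θ_α(j) = k(k−1)·θ_α(k)/α = (2−α)(3−α)⋯(k−1−α)/(k−2)!. -/
open scoped BigOperators
open Finset Filter

noncomputable def gAux (α : ℝ) (n : ℕ) : ℝ :=
  (∏ j ∈ Finset.Ico 2 (n + 2), ((j : ℝ) - α)) / (Nat.factorial n)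

lemma gAux_nonneg (α : ℝ) (hα2 : α ≤ 2) (n : ℕ) : 0 ≤ gAux α n := by
  apply div_nonneg
  · apply Finset.prod_nonneg
    intro j hj
    simp only [Finset.mem_Ico] at hj
    have : (2:ℝ) ≤ j := by exact_mod_cast hj.1
    linarith
  · positivity

lemma gAux_succ (α : ℝ) (n : ℕ) :
    gAux α (n+1) = gAux α n * (((n:ℝ) + 2 - α) / ((n:ℝ) + 1)) := by
  unfold gAux
  rw [show n + 1 + 2 = (n + 2) + 1 by ring,
    Finset.prod_Ico_succ_top (by omega : 2 ≤ n + 2), Nat.factorial_succ]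
  rw [div_mul_div_comm]
  congr 1
  · push_cast; ring
  · push_cast; ring

lemma gAux_zero (α : ℝ) : gAux α 0 = 1 := by simp [gAux]

lemma key (α : ℝ) (hα : α ≠ 0) (n : ℕ) :
    ((α - 1) / α) * (((n + 2 : ℕ) : ℝ) * theta α (n + 2)) = gAux α n - gAux α (n + 1) := by
  rw [gAux_succ]
  unfold theta gAux
  rw [if_neg (by omega)]
  have h2 : ((n).factorial : ℝ) ≠ 0 := by positivity
  have h3 : ((n+2).factorial : ℝ) = ((n:ℝ)+2) * ((n:ℝ)+1) * (n.factorial : ℝ) := by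
    rw [Nat.factorial_succ, Nat.factorial_succ]; push_cast; ring
  rw [h3]
  push_cast
  field_simp
  ring

lemma gAux_antitone_step (α : ℝ) (hα1 : 1 < α) (hα2 : α ≤ 2) (n : ℕ) :
    gAux α (n+1) ≤ gAux α n := by
  rw [gAux_succ]
  have h0 : (0:ℝ) ≤ gAux α n := gAux_nonneg α hα2 n
  have : ((n:ℝ) + 2 - α) / ((n:ℝ) + 1) ≤ 1 := by
    rw [div_le_one (by positivity)]; linarith
  nlinarith [gAux_nonneg α hα2 n]

lemma gAux_tendsto_zero (α : ℝ) (hα1 : 1 < α) (hα2 : α ≤ 2) :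
    Tendsto (gAux α) atTop (nhds 0) := by
  have hb : ∀ n, gAux α n ≤ Real.exp (-(α-1) * ∑ i ∈ Finset.range n, (1 / ((i:ℝ) + 1))) := by
    intro n
    have hprod : gAux α n = ∏ i ∈ Finset.range n, (((i:ℝ) + 2 - α) / ((i:ℝ) + 1)) := by
      induction n with
      | zero => simp [gAux_zero]
      | succ m ih => rw [gAux_succ, ih, Finset.prod_range_succ]
    rw [hprod]
    have : ∀ i ∈ Finset.range n, ((i:ℝ) + 2 - α) / ((i:ℝ) + 1) ≤
        Real.exp (-(α-1) * (1 / ((i:ℝ) + 1))) := by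
      intro i _
      have hpos : (0:ℝ) < (i:ℝ) + 1 := by positivity
      have heq : ((i:ℝ) + 2 - α) / ((i:ℝ) + 1) = (-(α-1) * (1 / ((i:ℝ) + 1))) + 1 := by
        field_simp
        ring
      rw [heq]
      exact Real.add_one_le_exp _
    calc ∏ i ∈ Finset.range n, (((i:ℝ) + 2 - α) / ((i:ℝ) + 1))
        ≤ ∏ i ∈ Finset.range n, Real.exp (-(α-1) * (1 / ((i:ℝ) + 1))) := by
          apply Finset.prod_le_prod
          · intro i _
            have h1 : (0:ℝ) ≤ (i:ℝ) + 2 - α := by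
              have : (0:ℝ) ≤ (i:ℝ) := Nat.cast_nonneg i
              linarith
            positivity
          · exact this
      _ = Real.exp (∑ i ∈ Finset.range n, (-(α-1) * (1 / ((i:ℝ) + 1)))) := by
          rw [Real.exp_sum]
      _ = Real.exp (-(α-1) * ∑ i ∈ Finset.range n, (1 / ((i:ℝ) + 1))) := by
          rw [Finset.mul_sum]
  have hH : Tendsto (fun n => ∑ i ∈ Finset.range n, (1 / ((i:ℝ) + 1))) atTop atTop :=
    Real.tendsto_sum_range_one_div_nat_succ_atTop
  have hmul : Tendsto (fun n => -(α-1) * ∑ i ∈ Finset.range n, (1 / ((i:ℝ) + 1))) atTop atBot := by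
    apply Tendsto.const_mul_atTop_of_neg (by linarith) hH
  have hexp : Tendsto (fun n => Real.exp (-(α-1) * ∑ i ∈ Finset.range n, (1 / ((i:ℝ) + 1))))
      atTop (nhds 0) := Real.tendsto_exp_atBot.comp hmul
  exact squeeze_zero (fun n => gAux_nonneg α hα2 n) hb hexp

/-- For `α ∈ (1,2]` and integer `k ≥ 3`, the tail of the size-biased `α`-offspring
distribution satisfies
`((α−1)/α) ∑_{j≥k} j θ_α(j) = k(k−1) θ_α(k)/α = (2−α)(3−α)⋯(k−1−α)/(k−2)!`. -/
theorem stmt_3 (α : ℝ) (hα1 : 1 < α) (hα2 : α ≤ 2) (k : ℕ) (hk : 3 ≤ k) :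
    ((α - 1) / α) * ∑' j : ℕ, ((k + j : ℕ) : ℝ) * theta α (k + j)
      = (k : ℝ) * ((k : ℝ) - 1) * theta α k / α ∧
    (k : ℝ) * ((k : ℝ) - 1) * theta α k / α
      = (∏ j ∈ Finset.Ico 2 k, ((j : ℝ) - α)) / (Nat.factorial (k - 2)) := by
  have hα0 : α ≠ 0 := by linarith
  obtain ⟨m, rfl⟩ : ∃ m, k = m + 2 := ⟨k - 2, by omega⟩
  -- second part
  have hsecond : ((m + 2 : ℕ) : ℝ) * (((m + 2 : ℕ) : ℝ) - 1) * theta α (m + 2) / α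
      = (∏ j ∈ Finset.Ico 2 (m + 2), ((j : ℝ) - α)) / (Nat.factorial (m + 2 - 2)) := by
    unfold theta
    rw [if_neg (by omega), show m + 2 - 2 = m by omega]
    have h2 : ((m).factorial : ℝ) ≠ 0 := by positivity
    have h3 : ((m+2).factorial : ℝ) = ((m:ℝ)+2) * ((m:ℝ)+1) * (m.factorial : ℝ) := by
      rw [Nat.factorial_succ, Nat.factorial_succ]; push_cast; ring
    rw [h3]
    push_cast
    field_simp
    ring
  -- first part: telescoping sum
  set f : ℕ → ℝ := fun i => ((α - 1) / α) * (((m + 2 + i : ℕ) : ℝ) * theta α (m + 2 + i)) with hf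
  have hfk : ∀ i, f i = gAux α (m + i) - gAux α (m + i + 1) := by
    intro i
    have := key α hα0 (m + i)
    simpa [hf, show m + i + 2 = m + 2 + i by ring] using this
  have hpartial : ∀ N, ∑ i ∈ Finset.range N, f i = gAux α m - gAux α (m + N) := by
    intro N
    calc ∑ i ∈ Finset.range N, f i
        = ∑ i ∈ Finset.range N, ((fun i => gAux α (m + i)) i - (fun i => gAux α (m + i)) (i+1)) := by
          apply Finset.sum_congr rfl
          intro i _
          rw [hfk i]
          simp [show m + (i + 1) = m + i + 1 by ring]
      _ = gAux α (m + 0) - gAux α (m + N) := Finset.sum_range_sub' _ N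
      _ = gAux α m - gAux α (m + N) := by rw [Nat.add_zero]
  have hfnonneg : ∀ i, 0 ≤ f i := by
    intro i
    rw [hfk i]
    have := gAux_antitone_step α hα1 hα2 (m + i)
    linarith
  have hsummable : Summable f := by
    apply summable_of_sum_range_le (c := gAux α m) hfnonneg
    intro N
    rw [hpartial N]
    have := gAux_nonneg α hα2 (m + N)
    linarith
  have htail : Tendsto (fun N => gAux α (m + N)) atTop (nhds 0) := by
    have := (gAux_tendsto_zero α hα1 hα2).comp (tendsto_add_atTop_nat m)
    simpa [Function.comp_def, Nat.add_comm] using this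
  have hhs : HasSum f (gAux α m) := by
    rw [hsummable.hasSum_iff_tendsto_nat]
    have : Tendsto (fun N => gAux α m - gAux α (m + N)) atTop (nhds (gAux α m - 0)) :=
      tendsto_const_nhds.sub htail
    simpa [hpartial] using this
  have htsum : ∑' i, f i = gAux α m := hhs.tsum_eq
  have hfirst : ((α - 1) / α) * ∑' j : ℕ, ((m + 2 + j : ℕ) : ℝ) * theta α (m + 2 + j)
      = gAux α m := by
    rw [← tsum_mul_left]
    exact htsum
  constructor
  · rw [hfirst, hsecond]
    unfold gAux
    rw [show m + 2 - 2 = m by omega]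
  · exact hsecond
end

section
/- One has 0 < liminf_{α↓1} (α−1)²·∑_{k=2}^∞ k·θ_α(k)·log k ≤ limsup_{α↓1} (α−1)²·∑_{k=2}^∞ k·θ_α(k)·log k < ∞, where the liminf and limsup are taken as the real parameter α tends to 1 from the right. -/
open scoped BigOperators

section AuxStmt9
open Finset Real Filter

lemma factor_upper {β : ℝ} (hβ0 : 0 < β) (hβ : β ≤ 1/2) {i : ℕ} (hi : 1 ≤ i) :
    1 - β / i ≤ ((i : ℝ) / (i+1)) ^ (β : ℝ) := by
  have hc : (1:ℝ) ≤ (i:ℝ) := by exact_mod_cast hi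
  have hcp : (0:ℝ) < i := by linarith
  have hpos : (0:ℝ) < (i:ℝ)/(i+1) := by positivity
  rw [Real.rpow_def_of_pos hpos]
  have hlog : Real.log ((i:ℝ)/(i+1)) = - Real.log (1 + 1/(i:ℝ)) := by
    rw [← Real.log_inv]; congr 1; field_simp
  rw [hlog]
  have h1 : Real.log (1 + 1/(i:ℝ)) ≤ 1/(i:ℝ)  := by
    have := Real.log_le_sub_one_of_pos (x := 1 + 1/(i:ℝ)) (by positivity)
    linarith
  have h2 : 1 - β/(i:ℝ) ≤ Real.exp (-(β * (1/(i:ℝ)))) := by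
    have h := Real.add_one_le_exp (-(β * (1/(i:ℝ))))
    have : β / (i:ℝ) = β * (1/(i:ℝ)) := by ring
    linarith
  refine h2.trans (Real.exp_le_exp.mpr ?_)
  nlinarith

lemma factor_lower {β : ℝ} (hβ0 : 0 < β) (hβ : β ≤ 1/2) {i : ℕ} (hi : 1 ≤ i) :
    ((i : ℝ) / (i+1)) ^ (4*β : ℝ) ≤ 1 - β / i := by
  have hc : (1:ℝ) ≤ (i:ℝ) := by exact_mod_cast hi
  have hcp : (0:ℝ) < i := by linarith
  have hpos : (0:ℝ) < (i:ℝ)/(i+1) := by positivity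
  rw [Real.rpow_def_of_pos hpos]
  have hlog : Real.log ((i:ℝ)/(i+1)) = - Real.log (1 + 1/(i:ℝ)) := by
    rw [← Real.log_inv]; congr 1; field_simp
  rw [hlog]
  -- log(1+1/i) ≥ 1/(2i)
  have h1 : 1/(2*(i:ℝ)) ≤ Real.log (1 + 1/(i:ℝ)) := by
    have h := Real.one_sub_inv_le_log_of_pos (x := 1 + 1/(i:ℝ)) (by positivity)
    have hx : (0:ℝ) < 1 + 1/(i:ℝ) := by positivity
    have : 1 - (1 + 1/(i:ℝ))⁻¹ = (1/(i:ℝ))/(1 + 1/(i:ℝ)) := by field_simp; ring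
    rw [this] at h
    have hi1 : (1:ℝ) + 1/(i:ℝ) ≤ 2 := by
      have : 1/(i:ℝ) ≤ 1 := by rw [div_le_one hcp]; exact hc
      linarith
    have : 1/(2*(i:ℝ)) ≤ (1/(i:ℝ))/(1 + 1/(i:ℝ)) := by
      rw [div_le_div_iff₀ (by positivity) hx]
      have : (1 + 1/(i:ℝ)) * (1/(i:ℝ)) ≤ 2 * (1/(i:ℝ)) := by
        apply mul_le_mul_of_nonneg_right hi1 (by positivity)
      calc 1 * (1 + 1/(i:ℝ)) ≤ 2 := by linarith
      _ = 1/(i:ℝ) * (2*(i:ℝ)) := by field_simp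
    linarith
  -- exp(-2β/i) ≤ 1 - β/i
  have ht : 0 < β/(i:ℝ) := by positivity
  have ht2 : β/(i:ℝ) ≤ 1/2 := by
    calc β/(i:ℝ) ≤ β/1 := by apply div_le_div_of_nonneg_left (le_of_lt hβ0) one_pos hc |>.trans_eq rfl
    _ ≤ 1/2 := by linarith
  have h2 : Real.exp (-(2*(β/(i:ℝ)))) ≤ 1 - β/(i:ℝ) := by
    rw [Real.exp_neg]
    rw [inv_le_comm₀ (Real.exp_pos _) (by linarith)]
    have h := Real.add_one_le_exp (2*(β/(i:ℝ)))
    have key : (1:ℝ) ≤ (1 + 2*(β/(i:ℝ))) * (1 - β/(i:ℝ)) := by nlinarith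
    have hthis : (1 - β/(i:ℝ))⁻¹ ≤ 1 + 2*(β/(i:ℝ)) := by
      rw [inv_eq_one_div, div_le_iff₀ (by linarith)]
      linarith
    linarith
  refine le_trans (Real.exp_le_exp.mpr ?_) h2
  have hmul := mul_le_mul_of_nonneg_left h1 (by positivity : (0:ℝ) ≤ 4*β)
  have e1 : 4*β*(1/(2*(i:ℝ))) = 2*(β/(i:ℝ)) := by field_simp; ring
  nlinarith

lemma telescope_prod (p : ℝ) : ∀ n : ℕ,
    (∏ i ∈ Finset.Ico 1 (n+1), ((i : ℝ) / (i+1)) ^ p) = ((n+1 : ℕ) : ℝ) ^ (-p)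
  | 0 => by simp
  | (n+1) => by
    rw [Finset.prod_Ico_succ_top (a := 1) (b := n+1) (by omega)]
    rw [telescope_prod p n]
    have h1 : (0:ℝ) < ((n+1:ℕ):ℝ) := by positivity
    have h2 : (0:ℝ) < ((n+2:ℕ):ℝ) := by positivity
    rw [Real.rpow_neg h1.le, Real.rpow_neg h2.le]
    rw [← Real.inv_rpow h1.le, ← Real.inv_rpow (by positivity)]
    rw [← Real.mul_rpow (by positivity) (by positivity)]
    congr 2
    push_cast
    field_simp
    ring

lemma rpow_base_antitone' {a b p : ℝ} (ha : 0 < a) (hab : a ≤ b) (hp : p ≤ 0) :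
    b ^ p ≤ a ^ p := by
  have hb : 0 < b := lt_of_lt_of_le ha hab
  rw [show p = -(-p) by ring, Real.rpow_neg ha.le, Real.rpow_neg hb.le]
  exact inv_anti₀ (Real.rpow_pos_of_pos ha _) (Real.rpow_le_rpow ha.le hab (by linarith))

lemma mvt1 {p a : ℝ} (hp : 0 < p) (ha : 1 ≤ a) :
    p * (a+1) ^ (-p-1) ≤ a ^ (-p) - (a+1) ^ (-p) := by
  have hd : ∀ x ∈ Set.Ioo a (a+1), HasDerivAt (fun x : ℝ => x ^ (-p)) (-p * x ^ (-p-1)) x := by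
    intro x hx
    exact Real.hasDerivAt_rpow_const (Or.inl (by nlinarith [hx.1] : x ≠ 0))
  have hc : ContinuousOn (fun x : ℝ => x ^ (-p)) (Set.Icc a (a+1)) := by
    intro x hx
    have hx0 : x ≠ 0 := by nlinarith [hx.1]
    exact (Real.hasDerivAt_rpow_const (Or.inl hx0)).continuousAt.continuousWithinAt
  obtain ⟨c, hc1, hc2⟩ := exists_hasDerivAt_eq_slope (fun x : ℝ => x ^ (-p))
    (fun x => -p * x ^ (-p-1)) (by linarith) hc hd
  have hcpos : 0 < c := by linarith [hc1.1]
  have : (a+1) ^ (-p) - a ^ (-p) = -p * c ^ (-p-1) := by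
    rw [hc2]; field_simp; ring
  have hanti : (a+1) ^ (-p-1) ≤ c ^ (-p-1) :=
    rpow_base_antitone' hcpos (le_of_lt hc1.2) (by linarith)
  nlinarith

lemma log_three_gt_one : (1:ℝ) < Real.log 3 := by
  rw [Real.lt_log_iff_exp_lt (by norm_num)]
  calc Real.exp 1 < 2.7182818286 := Real.exp_one_lt_d9
  _ < 3 := by norm_num

lemma phi_anti {s : ℝ} (hs : 0 < s) :
    AntitoneOn (fun x : ℝ => x ^ (-1-s) * Real.log x) (Set.Ici 3) := by
  have hd : ∀ x : ℝ, 3 ≤ x → HasDerivAt (fun x : ℝ => x ^ (-1-s) * Real.log x)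
      (x ^ (-1-s-1) * (1 + (-1-s) * Real.log x)) x := by
    intro x hx
    have hx0 : (0:ℝ) < x := by linarith
    have h1 := (Real.hasDerivAt_rpow_const (x := x) (p := -1-s) (Or.inl hx0.ne')).mul
      (Real.hasDerivAt_log hx0.ne')
    refine h1.congr_deriv ?_
    rw [show (-1-s-1) = (-1-s) + (-1) by ring, Real.rpow_add hx0, Real.rpow_neg_one]
    field_simp
    ring
  apply antitoneOn_of_deriv_nonpos (convex_Ici 3)
  · intro x hx
    exact (hd x hx).continuousAt.continuousWithinAt
  · intro x hx
    rw [interior_Ici] at hx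
    exact (hd x (le_of_lt hx)).differentiableAt.differentiableWithinAt
  · intro x hx
    rw [interior_Ici] at hx
    rw [(hd x (le_of_lt hx)).deriv]
    have hx0 : (0:ℝ) < x := by linarith [hx.out]
    have hlog : 1 < Real.log x := by
      calc (1:ℝ) < Real.log 3 := log_three_gt_one
      _ ≤ Real.log x := Real.log_le_log (by norm_num) (le_of_lt hx)
    have hr : (0:ℝ) < x ^ (-1-s-1) := Real.rpow_pos_of_pos hx0 _
    have hb : 1 + (-1-s) * Real.log x ≤ 0 := by nlinarith
    exact mul_nonpos_of_nonneg_of_nonpos hr.le hb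

lemma mvt2 {s a : ℝ} (hs : 0 < s) (ha : 3 ≤ a) :
    a ^ (-s) * (Real.log a + 1/s) - (a+1) ^ (-s) * (Real.log (a+1) + 1/s)
      ≤ s * (a ^ (-1-s) * Real.log a) := by
  set G : ℝ → ℝ := fun x => x ^ (-s) * (Real.log x + 1/s) with hG
  have hd : ∀ x : ℝ, 0 < x → HasDerivAt G (-s * (x ^ (-1-s) * Real.log x)) x := by
    intro x hx0
    have h1 := (Real.hasDerivAt_rpow_const (x := x) (p := -s) (Or.inl hx0.ne')).mul
      ((Real.hasDerivAt_log hx0.ne').add_const (1/s))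
    refine h1.congr_deriv ?_
    have e1 : x ^ (-s) * x⁻¹ = x ^ (-1-s) := by
      rw [show (-1-s) = (-s) + (-1) by ring, Real.rpow_add hx0, Real.rpow_neg_one]
    have e2 : x ^ (-s-1) = x ^ (-1-s) := by ring_nf
    rw [e2, e1]
    field_simp
    ring
  obtain ⟨c, hc1, hc2⟩ := exists_hasDerivAt_eq_slope G (fun x => -s * (x ^ (-1-s) * Real.log x))
    (by linarith : a < a+1) (fun x hx => (hd x (by linarith [hx.1])).continuousAt.continuousWithinAt)
    (fun x hx => hd x (by linarith [hx.1]))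
  have hslope : G (a+1) - G a = -s * (c ^ (-1-s) * Real.log c) := by
    rw [hc2]; field_simp; ring
  have hphi : c ^ (-1-s) * Real.log c ≤ a ^ (-1-s) * Real.log a :=
    phi_anti hs (Set.mem_Ici.mpr ha) (Set.mem_Ici.mpr (by linarith [hc1.1])) (le_of_lt hc1.1)
  have : G a - G (a+1) = s * (c ^ (-1-s) * Real.log c) := by linarith [hslope]
  have key : a ^ (-s) * (Real.log a + 1/s) - (a+1) ^ (-s) * (Real.log (a+1) + 1/s)
      = s * (c ^ (-1-s) * Real.log c) := by simpa [hG] using this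
  rw [key]
  exact mul_le_mul_of_nonneg_left hphi hs.le

lemma factor_nonneg {β : ℝ} (hβ0 : 0 < β) (hβ : β ≤ 1/2) {i : ℕ} (hi : 1 ≤ i) :
    0 ≤ 1 - β / i := by
  have hc : (1:ℝ) ≤ (i:ℝ) := by exact_mod_cast hi
  have : β / (i:ℝ) ≤ β := by
    rw [div_le_iff₀ (by linarith)]; nlinarith
  linarith

lemma prod_upper {β : ℝ} (hβ0 : 0 < β) (hβ : β ≤ 1/2) (n : ℕ) :
    (∏ i ∈ Finset.Ico 1 (n+1), (1 - β / (i:ℝ))) ≤ ((n+1 : ℕ) : ℝ) ^ (-β) := by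
  rw [← telescope_prod β n]
  apply Finset.prod_le_prod
  · intro i hi; exact factor_nonneg hβ0 hβ (Finset.mem_Ico.mp hi).1
  · intro i hi; exact factor_upper hβ0 hβ (Finset.mem_Ico.mp hi).1

lemma prod_lower {β : ℝ} (hβ0 : 0 < β) (hβ : β ≤ 1/2) (n : ℕ) :
    ((n+1 : ℕ) : ℝ) ^ (-(4*β)) ≤ ∏ i ∈ Finset.Ico 1 (n+1), (1 - β / (i:ℝ)) := by
  rw [← telescope_prod (4*β) n]
  apply Finset.prod_le_prod
  · intro i hi
    have hi1 := (Finset.mem_Ico.mp hi).1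
    positivity
  · intro i hi; exact factor_lower hβ0 hβ (Finset.mem_Ico.mp hi).1

lemma term_formula (α : ℝ) (n : ℕ) :
    ((n+2 : ℕ) : ℝ) * theta α (n+2)
      = α * (∏ i ∈ Finset.Ico 1 (n+1), (1 - (α-1) / (i:ℝ))) / ((n+1 : ℕ) : ℝ) := by
  have hf : ((n+2).factorial : ℝ) = ((n+2:ℕ):ℝ) * ((n+1:ℕ):ℝ) * (n.factorial : ℝ) := by
    push_cast [Nat.factorial_succ]
    ring
  have hprod : (∏ j ∈ Finset.Ico 2 (n+2), ((j : ℝ) - α))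
      = (n.factorial : ℝ) * ∏ i ∈ Finset.Ico 1 (n+1), (1 - (α-1) / (i:ℝ)) := by
    rw [Finset.prod_Ico_eq_prod_range]
    have : (n.factorial : ℝ) = ∏ i ∈ Finset.Ico 1 (n+1), (i:ℝ) := by
      rw [← Nat.cast_prod, Finset.prod_Ico_id_eq_factorial]
    rw [this, ← Finset.prod_mul_distrib, Finset.prod_Ico_eq_prod_range]
    simp only [Nat.add_sub_cancel]
    apply Finset.prod_congr rfl
    intro i _
    have hi : ((1+i:ℕ):ℝ) ≠ 0 := by positivity
    push_cast
    push_cast at hi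
    field_simp
    ring
  rw [theta]
  rw [if_neg (by omega)]
  rw [hprod, hf]
  have h2 : ((n+2:ℕ):ℝ) ≠ 0 := by positivity
  have h1 : ((n+1:ℕ):ℝ) ≠ 0 := by positivity
  have h0 : (n.factorial : ℝ) ≠ 0 := by positivity
  field_simp

lemma rpow_base_antitone {a b p : ℝ} (ha : 0 < a) (hab : a ≤ b) (hp : p ≤ 0) :
    b ^ p ≤ a ^ p := by
  have hb : 0 < b := lt_of_lt_of_le ha hab
  rw [show p = -(-p) by ring, Real.rpow_neg ha.le, Real.rpow_neg hb.le]
  apply inv_anti₀ (Real.rpow_pos_of_pos ha _)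
  exact Real.rpow_le_rpow ha.le hab (by linarith)

lemma term_upper {α : ℝ} (hα1 : 1 < α) (hα2 : α ≤ 3/2) (n : ℕ) :
    ((n+2 : ℕ) : ℝ) * theta α (n+2) * Real.log ((n+2:ℕ):ℝ)
      ≤ 2 * (((n+1:ℕ):ℝ) ^ (-1-(α-1)) * Real.log ((n+2:ℕ):ℝ)) := by
  have hβ0 : 0 < α - 1 := by linarith
  have hβ : α - 1 ≤ 1/2 := by linarith
  have hlog : 0 ≤ Real.log ((n+2:ℕ):ℝ) := by
    apply Real.log_nonneg; push_cast; linarith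
  rw [term_formula]
  have hP := prod_upper hβ0 hβ n
  have h1 : (0:ℝ) < ((n+1:ℕ):ℝ) := by positivity
  have key : α * (∏ i ∈ Finset.Ico 1 (n+1), (1 - (α-1) / (i:ℝ))) / ((n+1 : ℕ) : ℝ)
      ≤ 2 * ((n+1:ℕ):ℝ) ^ (-1-(α-1)) := by
    have : ((n+1:ℕ):ℝ) ^ (-1-(α-1)) = ((n+1:ℕ):ℝ) ^ (-(α-1)) / ((n+1:ℕ):ℝ) := by
      rw [show (-1-(α-1)) = (-(α-1)) + (-1) by ring, Real.rpow_add h1, Real.rpow_neg_one]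
      ring
    rw [this]
    rw [show 2 * (((n+1:ℕ):ℝ) ^ (-(α-1)) / ((n+1:ℕ):ℝ)) = 2 * ((n+1:ℕ):ℝ) ^ (-(α-1)) / ((n+1:ℕ):ℝ) by ring]
    apply (div_le_div_iff_of_pos_right h1).mpr ?_ |>.trans_eq rfl
    nlinarith [Real.rpow_nonneg (le_of_lt h1) (-(α-1))]
  calc α * (∏ i ∈ Finset.Ico 1 (n+1), (1 - (α-1) / (i:ℝ))) / ((n+1 : ℕ) : ℝ) * Real.log ((n+2:ℕ):ℝ)
      ≤ 2 * ((n+1:ℕ):ℝ) ^ (-1-(α-1)) * Real.log ((n+2:ℕ):ℝ) :=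
        mul_le_mul_of_nonneg_right key hlog
  _ = 2 * (((n+1:ℕ):ℝ) ^ (-1-(α-1)) * Real.log ((n+2:ℕ):ℝ)) := by ring

lemma term_lower {α : ℝ} (hα1 : 1 < α) (hα2 : α ≤ 3/2) (n : ℕ) :
    ((n+2:ℕ):ℝ) ^ (-1-4*(α-1)) * Real.log ((n+2:ℕ):ℝ)
      ≤ ((n+2 : ℕ) : ℝ) * theta α (n+2) * Real.log ((n+2:ℕ):ℝ) := by
  have hβ0 : 0 < α - 1 := by linarith
  have hβ : α - 1 ≤ 1/2 := by linarith
  have hlog : 0 ≤ Real.log ((n+2:ℕ):ℝ) := by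
    apply Real.log_nonneg; push_cast; linarith
  rw [term_formula]
  apply mul_le_mul_of_nonneg_right ?_ hlog
  have hP := prod_lower hβ0 hβ n
  have h1 : (0:ℝ) < ((n+1:ℕ):ℝ) := by positivity
  have h2 : (0:ℝ) < ((n+2:ℕ):ℝ) := by positivity
  have hmono : ((n+2:ℕ):ℝ) ^ (-(4*(α-1))) ≤ ((n+1:ℕ):ℝ) ^ (-(4*(α-1))) := by
    apply rpow_base_antitone h1 (by push_cast; linarith) (by linarith)
  have hsplit : ((n+2:ℕ):ℝ) ^ (-1-4*(α-1)) = ((n+2:ℕ):ℝ) ^ (-(4*(α-1))) / ((n+2:ℕ):ℝ) := by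
    rw [show (-1-4*(α-1)) = (-(4*(α-1))) + (-1) by ring, Real.rpow_add h2, Real.rpow_neg_one]
    ring
  rw [hsplit]
  have step1 : ((n+2:ℕ):ℝ) ^ (-(4*(α-1))) / ((n+2:ℕ):ℝ)
      ≤ ((n+1:ℕ):ℝ) ^ (-(4*(α-1))) / ((n+1:ℕ):ℝ) := by
    apply div_le_div₀ (by positivity) hmono h1 (by push_cast; linarith)
  refine step1.trans ?_
  rw [div_le_div_iff₀ h1 h1]
  have hPn : 0 ≤ ∏ i ∈ Finset.Ico 1 (n+1), (1 - (α-1) / (i:ℝ)) :=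
    le_trans (by positivity) hP
  have hαP : ((n+1:ℕ):ℝ) ^ (-(4*(α-1))) ≤ α * ∏ i ∈ Finset.Ico 1 (n+1), (1 - (α-1) / (i:ℝ)) := by
    nlinarith [mul_nonneg (le_of_lt hβ0) hPn]
  exact mul_le_mul_of_nonneg_right hαP h1.le

lemma zeta_aux {s : ℝ} (hs : 0 < s) : ∀ M : ℕ, 1 ≤ M →
    ∑ m ∈ Finset.Ico 1 (M+1), ((m:ℝ)) ^ (-1-s) ≤ 1 + (1/s) * (1 - ((M:ℝ)) ^ (-s)) := by
  intro M hM
  induction M, hM using Nat.le_induction with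
  | base =>
    norm_num
  | succ M hM ih =>
    rw [Finset.sum_Ico_succ_top (a := 1) (b := M+1) (by omega)]
    have hM1 : (1:ℝ) ≤ (M:ℝ) := by exact_mod_cast hM
    have key := mvt1 hs hM1
    have hcast : ((M+1:ℕ):ℝ) = (M:ℝ) + 1 := by push_cast; ring
    have hterm : ((M+1:ℕ):ℝ) ^ (-1-s) ≤ (1/s) * ((M:ℝ) ^ (-s) - ((M:ℝ)+1) ^ (-s)) := by
      rw [hcast, show (-1-s) = -s-1 by ring]
      rw [← sub_nonneg] at key ⊢
      have : (1/s) * ((M:ℝ) ^ (-s) - ((M:ℝ)+1) ^ (-s)) - ((M:ℝ)+1) ^ (-s-1)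
          = (1/s) * (((M:ℝ) ^ (-s) - ((M:ℝ)+1) ^ (-s)) - s * ((M:ℝ)+1) ^ (-s-1)) := by
        field_simp
      rw [this]
      positivity
    calc ∑ m ∈ Finset.Ico 1 (M+1), ((m:ℝ)) ^ (-1-s) + ((M+1:ℕ):ℝ) ^ (-1-s)
        ≤ (1 + (1/s) * (1 - ((M:ℝ)) ^ (-s))) + (1/s) * ((M:ℝ) ^ (-s) - ((M:ℝ)+1) ^ (-s)) := by
          have := ih
          linarith
    _ = 1 + (1/s) * (1 - (((M:ℝ))+1) ^ (-s)) := by ring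
    _ = 1 + (1/s) * (1 - (((M+1:ℕ)):ℝ) ^ (-s)) := by rw [hcast]

lemma zeta_bound {s : ℝ} (hs : 0 < s) (M : ℕ) :
    ∑ m ∈ Finset.Ico 1 M, ((m:ℝ)) ^ (-1-s) ≤ 1 + 1/s := by
  match M with
  | 0 => simp; positivity
  | 1 => simp; positivity
  | (M+1) =>
    rcases Nat.eq_zero_or_pos M with h | h
    · subst h; simp; positivity
    · refine (zeta_aux hs M h).trans ?_
      have : (0:ℝ) ≤ ((M:ℝ)) ^ (-s) := Real.rpow_nonneg (by positivity) _
      have h1s : 0 < 1/s := by positivity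
      nlinarith

lemma logsum_bound {β : ℝ} (hβ0 : 0 < β) (M : ℕ) :
    ∑ m ∈ Finset.Ico 1 M, ((m:ℝ)) ^ (-1-β) * Real.log m ≤ (2/β) * (1 + 2/β) := by
  have h2 : 0 < β/2 := by linarith
  calc ∑ m ∈ Finset.Ico 1 M, ((m:ℝ)) ^ (-1-β) * Real.log m
      ≤ ∑ m ∈ Finset.Ico 1 M, (2/β) * ((m:ℝ)) ^ (-1-β/2) := by
        apply Finset.sum_le_sum
        intro m hm
        have hm1 : 1 ≤ m := (Finset.mem_Ico.mp hm).1
        have hmr : (1:ℝ) ≤ (m:ℝ) := by exact_mod_cast hm1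
        have hmp : (0:ℝ) < (m:ℝ) := by linarith
        have hlog : Real.log (m:ℝ) ≤ (m:ℝ) ^ (β/2) / (β/2) :=
          Real.log_le_rpow_div (by positivity) h2
        have hrpos : (0:ℝ) ≤ ((m:ℝ)) ^ (-1-β) := Real.rpow_nonneg hmp.le _
        have e0 : ((m:ℝ)) ^ (-(β/2)) * ((m:ℝ)) ^ (β/2) = 1 := by
          rw [← Real.rpow_add hmp]; norm_num
        have key : ((m:ℝ)) ^ (-1-β) * ((m:ℝ) ^ (β/2) / (β/2)) = (2/β) * ((m:ℝ)) ^ (-1-β/2) := by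
          rw [show (-1-β) = (-1-β/2) + (-(β/2)) by ring, Real.rpow_add hmp]
          rw [show ((m:ℝ)) ^ ((-1-β/2):ℝ) * ((m:ℝ)) ^ (-(β/2)) * ((m:ℝ) ^ (β/2) / (β/2))
              = ((m:ℝ)) ^ ((-1-β/2):ℝ) * (((m:ℝ)) ^ (-(β/2)) * ((m:ℝ)) ^ (β/2)) / (β/2) by ring, e0]
          field_simp
        calc ((m:ℝ)) ^ (-1-β) * Real.log m ≤ ((m:ℝ)) ^ (-1-β) * ((m:ℝ) ^ (β/2) / (β/2)) :=
              mul_le_mul_of_nonneg_left hlog hrpos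
        _ = (2/β) * ((m:ℝ)) ^ (-1-β/2) := key
  _ = (2/β) * ∑ m ∈ Finset.Ico 1 M, ((m:ℝ)) ^ (-1-β/2) := by rw [Finset.mul_sum]
  _ ≤ (2/β) * (1 + 1/(β/2)) := by
        apply mul_le_mul_of_nonneg_left (zeta_bound h2 M) (by positivity)
  _ = (2/β) * (1 + 2/β) := by rw [show 1/(β/2) = 2/β by field_simp]

lemma g_nonneg {α : ℝ} (hα1 : 1 ≤ α) (hα2 : α ≤ 2) (k : ℕ) :
    0 ≤ (k:ℝ) * theta α k * Real.log k := by
  have hθ : 0 ≤ theta α k := by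
    rw [theta]
    split
    · exact le_refl 0
    · rename_i h
      apply div_nonneg _ (by positivity)
      apply mul_nonneg (by linarith)
      apply Finset.prod_nonneg
      intro j hj
      have : 2 ≤ j := (Finset.mem_Ico.mp hj).1
      have : (2:ℝ) ≤ (j:ℝ) := by exact_mod_cast this
      linarith
  rcases Nat.lt_or_ge k 1 with h | h
  · interval_cases k; simp
  · have : (1:ℝ) ≤ (k:ℝ) := by exact_mod_cast h
    have := Real.log_nonneg this
    positivity

lemma sum_range_g_le {α : ℝ} (hα1 : 1 < α) (hα2 : α ≤ 3/2) (N : ℕ) :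
    ∑ k ∈ Finset.range N, (k:ℝ) * theta α k * Real.log k ≤ 12 / (α-1)^2 := by
  set β := α - 1 with hβdef
  have hβ0 : 0 < β := by simp [hβdef]; linarith
  have hβ : β ≤ 1/2 := by simp [hβdef]; linarith
  have hnn : ∀ k : ℕ, 0 ≤ (k:ℝ) * theta α k * Real.log k :=
    fun k => g_nonneg (by linarith) (by linarith) k
  have hmain : ∀ N, 2 ≤ N → ∑ k ∈ Finset.range N, (k:ℝ) * theta α k * Real.log k ≤ 12 / β^2 := by
    intro N hN
    have hsplit : Finset.range N = Finset.Ico 0 N := by rw [Finset.range_eq_Ico]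
    rw [hsplit, ← Finset.sum_Ico_consecutive _ (by omega : 0 ≤ 2) (by omega : 2 ≤ N)]
    have h01 : ∑ k ∈ Finset.Ico (0:ℕ) 2, (k:ℝ) * theta α k * Real.log k = 0 := by
      rw [show Finset.Ico 0 2 = {0, 1} by rfl]
      simp [theta]
    rw [h01, zero_add]
    rw [Finset.sum_Ico_eq_sum_range]
    
    have hterm : ∀ i : ℕ, (((2+i:ℕ)):ℝ) * theta α (2+i) * Real.log ((2+i:ℕ):ℝ)
        ≤ 2 * Real.log 2 * ((i+1:ℕ):ℝ) ^ (-1-β) + 2 * (((i+1:ℕ):ℝ) ^ (-1-β) * Real.log ((i+1:ℕ):ℝ)) := by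
      intro i
      have h2i : (2+i) = (i+2) := by omega
      rw [h2i]
      refine (term_upper hα1 hα2 i).trans ?_
      have hlog2 : Real.log ((i+2:ℕ):ℝ) ≤ Real.log 2 + Real.log ((i+1:ℕ):ℝ) := by
        rw [← Real.log_mul (by norm_num) (by positivity)]
        apply Real.log_le_log (by positivity)
        push_cast; linarith
      have hrpos : (0:ℝ) ≤ ((i+1:ℕ):ℝ) ^ (-1-β) := Real.rpow_nonneg (by positivity) _
      calc 2 * (((i+1:ℕ):ℝ) ^ (-1-β) * Real.log ((i+2:ℕ):ℝ))
          ≤ 2 * (((i+1:ℕ):ℝ) ^ (-1-β) * (Real.log 2 + Real.log ((i+1:ℕ):ℝ))) := by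
            apply mul_le_mul_of_nonneg_left (mul_le_mul_of_nonneg_left hlog2 hrpos) (by norm_num)
      _ = 2 * Real.log 2 * ((i+1:ℕ):ℝ) ^ (-1-β) + 2 * (((i+1:ℕ):ℝ) ^ (-1-β) * Real.log ((i+1:ℕ):ℝ)) := by ring
    calc ∑ i ∈ Finset.range (N-2), ((2+i:ℕ):ℝ) * theta α (2+i) * Real.log ((2+i:ℕ):ℝ)
        ≤ ∑ i ∈ Finset.range (N-2), (2 * Real.log 2 * ((i+1:ℕ):ℝ) ^ (-1-β)
            + 2 * (((i+1:ℕ):ℝ) ^ (-1-β) * Real.log ((i+1:ℕ):ℝ))) :=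
          Finset.sum_le_sum (fun i _ => hterm i)
    _ = 2 * Real.log 2 * (∑ i ∈ Finset.range (N-2), ((i+1:ℕ):ℝ) ^ (-1-β))
          + 2 * ∑ i ∈ Finset.range (N-2), (((i+1:ℕ):ℝ) ^ (-1-β) * Real.log ((i+1:ℕ):ℝ)) := by
        rw [Finset.sum_add_distrib, Finset.mul_sum, Finset.mul_sum]
    _ = 2 * Real.log 2 * (∑ m ∈ Finset.Ico 1 (N-1), ((m:ℕ):ℝ) ^ (-1-β))
          + 2 * ∑ m ∈ Finset.Ico 1 (N-1), (((m:ℕ):ℝ) ^ (-1-β) * Real.log ((m:ℕ):ℝ)) := by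
        rw [Finset.sum_Ico_eq_sum_range, Finset.sum_Ico_eq_sum_range]
        have : N - 1 - 1 = N - 2 := by omega
        rw [this]
        simp [Nat.add_comm]
    _ ≤ 2 * Real.log 2 * (1 + 1/β) + 2 * ((2/β) * (1 + 2/β)) := by
        have hz := zeta_bound hβ0 (N-1)
        have hl := logsum_bound hβ0 (N-1)
        have hlog2pos : (0:ℝ) ≤ Real.log 2 := Real.log_nonneg (by norm_num)
        gcongr
    _ ≤ 12 / β^2 := by
        have hlog2le : Real.log 2 ≤ 1 := by
          have := Real.log_le_sub_one_of_pos (x := 2) (by norm_num)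
          linarith
        have hlog2pos : (0:ℝ) ≤ Real.log 2 := Real.log_nonneg (by norm_num)
        have hu : 2 ≤ 1/β := by
          rw [le_div_iff₀ hβ0]; linarith
        have hupos : 0 < 1/β := by positivity
        have h2β : 2/β = 2 * (1/β) := by ring
        have h12 : 12/β^2 = 12 * (1/β) * (1/β) := by field_simp
        rw [h2β, h12]
        nlinarith [sq_nonneg (1/β), mul_pos hupos hupos]
  rcases Nat.lt_or_ge N 2 with h | h
  · have : ∑ k ∈ Finset.range N, (k:ℝ) * theta α k * Real.log k ≤ ∑ k ∈ Finset.range 2, (k:ℝ) * theta α k * Real.log k := by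
      apply Finset.sum_le_sum_of_subset_of_nonneg
      · exact Finset.range_subset_range.mpr (by omega)
      · intro k _ _; exact hnn k
    refine this.trans ?_
    exact hmain 2 (le_refl 2)
  · exact hmain N h

lemma summable_g {α : ℝ} (hα1 : 1 < α) (hα2 : α ≤ 3/2) :
    Summable (fun k : ℕ => (k:ℝ) * theta α k * Real.log k) :=
  summable_of_sum_range_le (fun k => g_nonneg (by linarith) (by linarith) k)
    (sum_range_g_le hα1 hα2)

lemma tsum_g_le {α : ℝ} (hα1 : 1 < α) (hα2 : α ≤ 3/2) :
    ∑' k : ℕ, (k:ℝ) * theta α k * Real.log k ≤ 12 / (α-1)^2 :=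
  Real.tsum_le_of_sum_range_le (fun k => g_nonneg (by linarith) (by linarith) k)
    (sum_range_g_le hα1 hα2)

lemma tsum_g_ge {α : ℝ} (hα1 : 1 < α) (hα2 : α ≤ 3/2) :
    1 / (144 * (α-1)^2) ≤ ∑' k : ℕ, (k:ℝ) * theta α k * Real.log k := by
  set s : ℝ := 4*(α-1) with hsdef
  have hs0 : 0 < s := by simp [hsdef]; linarith
  have hs2 : s ≤ 2 := by simp [hsdef]; linarith
  set Gn : ℕ → ℝ := fun k => ((k:ℝ)) ^ (-s) * (Real.log k + 1/s) with hGn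
  -- partial sums lower bound
  have hpart : ∀ N : ℕ, 3 ≤ N → (1/s) * (Gn 3 - Gn N)
      ≤ ∑ k ∈ Finset.range N, (k:ℝ) * theta α k * Real.log k := by
    intro N hN
    have hsub : Finset.Ico 3 N ⊆ Finset.range N := by
      intro k hk; rw [Finset.mem_range]; exact (Finset.mem_Ico.mp hk).2
    have h1 : ∑ k ∈ Finset.Ico 3 N, (k:ℝ) * theta α k * Real.log k
        ≤ ∑ k ∈ Finset.range N, (k:ℝ) * theta α k * Real.log k := by
      apply Finset.sum_le_sum_of_subset_of_nonneg hsub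
      intro k _ _; exact g_nonneg (by linarith) (by linarith) k
    refine le_trans ?_ h1
    have h2 : ∀ k : ℕ, 3 ≤ k → (1/s) * (Gn k - Gn (k+1)) ≤ (k:ℝ) * theta α k * Real.log k := by
      intro k hk
      have hk3 : (3:ℝ) ≤ (k:ℝ) := by exact_mod_cast hk
      have hm := mvt2 hs0 hk3
      have hGeq : Gn k - Gn (k+1) = (k:ℝ) ^ (-s) * (Real.log (k:ℝ) + 1/s)
          - ((k:ℝ)+1) ^ (-s) * (Real.log ((k:ℝ)+1) + 1/s) := by
        simp only [hGn]
        push_cast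
        ring_nf
      have step1 : (1/s) * (Gn k - Gn (k+1)) ≤ (k:ℝ) ^ (-1-s) * Real.log (k:ℝ) := by
        rw [hGeq]
        rw [show (1/s) * ((k:ℝ) ^ (-s) * (Real.log (k:ℝ) + 1/s)
            - ((k:ℝ)+1) ^ (-s) * (Real.log ((k:ℝ)+1) + 1/s))
            = ((k:ℝ) ^ (-s) * (Real.log (k:ℝ) + 1/s)
            - ((k:ℝ)+1) ^ (-s) * (Real.log ((k:ℝ)+1) + 1/s)) / s by ring]
        rw [div_le_iff₀ hs0]
        calc (k:ℝ) ^ (-s) * (Real.log (k:ℝ) + 1/s)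
            - ((k:ℝ)+1) ^ (-s) * (Real.log ((k:ℝ)+1) + 1/s)
            ≤ s * ((k:ℝ) ^ (-1-s) * Real.log (k:ℝ)) := hm
        _ = (k:ℝ) ^ (-1-s) * Real.log (k:ℝ) * s := by ring
      refine step1.trans ?_
      obtain ⟨n, rfl⟩ : ∃ n, k = n + 2 := ⟨k - 2, by omega⟩
      have := term_lower hα1 hα2 n
      rw [show -1-4*(α-1) = -1-s by rw [hsdef]] at this
      exact_mod_cast this
    have htel : ∑ k ∈ Finset.Ico 3 N, (Gn k - Gn (k+1)) = Gn 3 - Gn N := by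
      have h := Finset.sum_Ico_eq_sub (fun k => Gn (k+1) - Gn k) hN
      rw [Finset.sum_range_sub Gn, Finset.sum_range_sub Gn] at h
      have e : ∑ k ∈ Finset.Ico 3 N, (Gn k - Gn (k+1))
          = - ∑ k ∈ Finset.Ico 3 N, (Gn (k+1) - Gn k) := by
        rw [← Finset.sum_neg_distrib]
        apply Finset.sum_congr rfl
        intro k _; ring
      rw [e, h]; ring
    calc (1/s) * (Gn 3 - Gn N) = ∑ k ∈ Finset.Ico 3 N, (1/s) * (Gn k - Gn (k+1)) := by
          rw [← Finset.mul_sum, htel]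
    _ ≤ ∑ k ∈ Finset.Ico 3 N, (k:ℝ) * theta α k * Real.log k := by
          apply Finset.sum_le_sum
          intro k hk
          exact h2 k (Finset.mem_Ico.mp hk).1
  -- limits
  have hsummable := summable_g hα1 hα2
  have hp : Tendsto (fun N => ∑ k ∈ Finset.range N, (k:ℝ) * theta α k * Real.log k)
      atTop (nhds (∑' k : ℕ, (k:ℝ) * theta α k * Real.log k)) :=
    hsummable.hasSum.tendsto_sum_nat
  have hG0 : Tendsto (fun N : ℕ => Gn N) atTop (nhds 0) := by
    have t1 : Tendsto (fun x : ℝ => Real.log x / x ^ s) atTop (nhds 0) :=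
      (isLittleO_log_rpow_atTop hs0).tendsto_div_nhds_zero
    have t2 : Tendsto (fun x : ℝ => x ^ (-s)) atTop (nhds 0) := tendsto_rpow_neg_atTop hs0
    have t3 : Tendsto (fun x : ℝ => x ^ (-s) * Real.log x + x ^ (-s) * (1/s)) atTop (nhds 0) := by
      have e1 : Tendsto (fun x : ℝ => x ^ (-s) * Real.log x) atTop (nhds 0) := by
        apply t1.congr'
        filter_upwards [eventually_gt_atTop 0] with x hx
        rw [Real.rpow_neg hx.le]
        ring
      have e2 : Tendsto (fun x : ℝ => x ^ (-s) * (1/s)) atTop (nhds 0) := by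
        have := t2.mul_const (1/s)
        simpa using this
      simpa using e1.add e2
    have t4 := t3.comp (tendsto_natCast_atTop_atTop (R := ℝ))
    apply t4.congr
    intro N
    simp only [hGn, Function.comp]
    ring
  have hq : Tendsto (fun N : ℕ => (1/s) * (Gn 3 - Gn N)) atTop (nhds ((1/s) * Gn 3)) := by
    have := (tendsto_const_nhds (x := Gn 3) (f := atTop (α := ℕ))).sub hG0
    have := this.const_mul (1/s)
    simpa using this
  have hfinal : (1/s) * Gn 3 ≤ ∑' k : ℕ, (k:ℝ) * theta α k * Real.log k := by
    apply le_of_tendsto_of_tendsto hq hp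
    filter_upwards [eventually_ge_atTop 3] with N hN
    exact hpart N hN
  refine le_trans ?_ hfinal
  -- numeric bound
  have h3 : ((3:ℕ):ℝ) = (3:ℝ) := by norm_num
  have hG3 : Gn 3 ≥ (1/9) * (1/s) := by
    simp only [hGn, h3]
    have h1 : (3:ℝ) ^ (-2:ℝ) ≤ (3:ℝ) ^ (-s) :=
      Real.rpow_le_rpow_of_exponent_le (by norm_num) (by linarith)
    have h2 : (3:ℝ) ^ (-2:ℝ) = 1/9 := by
      rw [show (-2:ℝ) = ((-2:ℤ):ℝ) by norm_num, Real.rpow_intCast]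
      norm_num
    have hlog3 : 0 ≤ Real.log 3 := Real.log_nonneg (by norm_num)
    have hspos : 0 < 1/s := by positivity
    calc (3:ℝ) ^ (-s) * (Real.log 3 + 1/s) ≥ (1/9) * (Real.log 3 + 1/s) := by
          apply mul_le_mul_of_nonneg_right _ (by positivity)
          rw [← h2]; exact h1
    _ ≥ (1/9) * (1/s) := by nlinarith
  have : (1/s) * ((1/9) * (1/s)) ≤ (1/s) * Gn 3 :=
    mul_le_mul_of_nonneg_left hG3 (by positivity)
  refine le_trans (le_of_eq ?_) this
  have hne : α - (1:ℝ) ≠ 0 := by linarith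
  rw [hsdef]
  field_simp
  ring

end AuxStmt9

/-- `0 < liminf_{α↓1} (α−1)² ∑_{k≥2} k θ_α(k) log k ≤ limsup_{α↓1} (α−1)² ∑_{k≥2} k θ_α(k) log k < ∞`. -/
theorem stmt_9 :
    0 < Filter.liminf
        (fun α : ℝ => (((α - 1) ^ 2 * ∑' k : ℕ, (k : ℝ) * theta α k * Real.log k : ℝ) : EReal))
        (nhdsWithin 1 (Set.Ioi 1)) ∧
    Filter.liminf
        (fun α : ℝ => (((α - 1) ^ 2 * ∑' k : ℕ, (k : ℝ) * theta α k * Real.log k : ℝ) : EReal))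
        (nhdsWithin 1 (Set.Ioi 1))
      ≤ Filter.limsup
        (fun α : ℝ => (((α - 1) ^ 2 * ∑' k : ℕ, (k : ℝ) * theta α k * Real.log k : ℝ) : EReal))
        (nhdsWithin 1 (Set.Ioi 1)) ∧
    Filter.limsup
        (fun α : ℝ => (((α - 1) ^ 2 * ∑' k : ℕ, (k : ℝ) * theta α k * Real.log k : ℝ) : EReal))
        (nhdsWithin 1 (Set.Ioi 1)) < ⊤ := by
  have hmem : Set.Ioo (1:ℝ) (3/2) ∈ nhdsWithin (1:ℝ) (Set.Ioi 1) :=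
    Ioo_mem_nhdsGT_of_mem (by constructor <;> norm_num)
  have h_up : ∀ᶠ α in nhdsWithin (1:ℝ) (Set.Ioi 1),
      (((α - 1) ^ 2 * ∑' k : ℕ, (k : ℝ) * theta α k * Real.log k : ℝ) : EReal)
        ≤ ((12:ℝ) : EReal) := by
    filter_upwards [hmem] with α hα
    rw [EReal.coe_le_coe_iff]
    have h1 : (0:ℝ) < (α-1)^2 := by
      have := hα.1; nlinarith [hα.1]
    have := tsum_g_le hα.1 (le_of_lt hα.2)
    calc (α - 1) ^ 2 * ∑' k : ℕ, (k : ℝ) * theta α k * Real.log k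
        ≤ (α - 1) ^ 2 * (12/(α-1)^2) := mul_le_mul_of_nonneg_left this h1.le
    _ = 12 := by field_simp; exact div_self (sub_pos.mpr hα.1).ne'
  have h_lo : ∀ᶠ α in nhdsWithin (1:ℝ) (Set.Ioi 1),
      (((1/144:ℝ)) : EReal)
        ≤ (((α - 1) ^ 2 * ∑' k : ℕ, (k : ℝ) * theta α k * Real.log k : ℝ) : EReal) := by
    filter_upwards [hmem] with α hα
    rw [EReal.coe_le_coe_iff]
    have h1 : (0:ℝ) < (α-1)^2 := by nlinarith [hα.1]
    have := tsum_g_ge hα.1 (le_of_lt hα.2)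
    calc (1/144:ℝ) = (α-1)^2 * (1/(144*(α-1)^2)) := by rw [mul_one_div, mul_comm 144, ← div_div, div_self h1.ne']
    _ ≤ (α - 1) ^ 2 * ∑' k : ℕ, (k : ℝ) * theta α k * Real.log k :=
        mul_le_mul_of_nonneg_left this h1.le
  have hliminf : (((1/144:ℝ)) : EReal) ≤ Filter.liminf
      (fun α : ℝ => (((α - 1) ^ 2 * ∑' k : ℕ, (k : ℝ) * theta α k * Real.log k : ℝ) : EReal))
      (nhdsWithin 1 (Set.Ioi 1)) := Filter.le_liminf_of_le (by isBoundedDefault) h_lo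
  have hlimsup : Filter.limsup
      (fun α : ℝ => (((α - 1) ^ 2 * ∑' k : ℕ, (k : ℝ) * theta α k * Real.log k : ℝ) : EReal))
      (nhdsWithin 1 (Set.Ioi 1)) ≤ ((12:ℝ) : EReal) :=
    Filter.limsup_le_of_le (by isBoundedDefault) h_up
  refine ⟨lt_of_lt_of_le ?_ hliminf, Filter.liminf_le_limsup, lt_of_le_of_lt hlimsup (EReal.coe_lt_top 12)⟩
  exact_mod_cast (by norm_num : (0:ℝ) < 1/144)
end

section
/- Let (q_n)_{n≥1} be a sequence in (0,1) with q_n → 0 and n·q_n^{α−1}·L(q_n) → 1/(α−1) as n → ∞. Then n·(1 − ∑_{k=1}^∞ k·ρ(k)·(1−q_n)^{k−1}) → α/(α−1) as n → ∞; equivalently, ∑_{k=1}^∞ k·ρ(k)·(1−q_n)^{k−1} = 1 − α/((α−1)·n) + o(1/n). -/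
open scoped BigOperators
open Filter Real Set

private lemma pow_bounds {s t : ℝ} (hs : 0 ≤ s) (hst : s ≤ t) (k : ℕ) :
    (k : ℝ) * s ^ (k - 1) * (t - s) ≤ t ^ k - s ^ k ∧
      t ^ k - s ^ k ≤ (k : ℝ) * t ^ (k - 1) * (t - s) := by
  have ht : 0 ≤ t := hs.trans hst
  have hts : 0 ≤ t - s := sub_nonneg.2 hst
  rcases Nat.eq_zero_or_pos k with hk | hk
  · subst hk; simp
  obtain ⟨m, rfl⟩ : ∃ m, k = m + 1 := ⟨k - 1, (Nat.succ_pred_eq_of_pos hk).symm⟩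
  have key : t ^ (m + 1) - s ^ (m + 1)
      = (∑ i ∈ Finset.range (m + 1), t ^ i * s ^ (m - i)) * (t - s) := by
    have h := geom_sum₂_mul t s (m + 1)
    simpa using h.symm
  have hup : ∀ i ∈ Finset.range (m + 1), t ^ i * s ^ (m - i) ≤ t ^ m := by
    intro i hi
    have hi' : i ≤ m := Nat.lt_succ_iff.mp (Finset.mem_range.mp hi)
    calc t ^ i * s ^ (m - i) ≤ t ^ i * t ^ (m - i) := by gcongr
      _ = t ^ m := by rw [← pow_add]; congr 1; omega
  have hlo : ∀ i ∈ Finset.range (m + 1), s ^ m ≤ t ^ i * s ^ (m - i) := by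
    intro i hi
    have hi' : i ≤ m := Nat.lt_succ_iff.mp (Finset.mem_range.mp hi)
    calc s ^ m = s ^ i * s ^ (m - i) := by rw [← pow_add]; congr 1; omega
      _ ≤ t ^ i * s ^ (m - i) := by gcongr
  have hsum_up : ∑ i ∈ Finset.range (m + 1), t ^ i * s ^ (m - i) ≤ (m + 1 : ℝ) * t ^ m := by
    calc ∑ i ∈ Finset.range (m + 1), t ^ i * s ^ (m - i)
        ≤ ∑ _i ∈ Finset.range (m + 1), t ^ m := Finset.sum_le_sum hup
      _ = (m + 1 : ℝ) * t ^ m := by simp [Finset.sum_const, nsmul_eq_mul]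
  have hsum_lo : (m + 1 : ℝ) * s ^ m ≤ ∑ i ∈ Finset.range (m + 1), t ^ i * s ^ (m - i) := by
    calc (m + 1 : ℝ) * s ^ m = ∑ _i ∈ Finset.range (m + 1), s ^ m := by
          simp [Finset.sum_const, nsmul_eq_mul]
      _ ≤ _ := Finset.sum_le_sum hlo
  constructor
  · rw [key]
    have := mul_le_mul_of_nonneg_right hsum_lo hts
    calc (↑(m+1) : ℝ) * s ^ (m + 1 - 1) * (t - s) = ((m + 1 : ℝ) * s ^ m) * (t - s) := by
          push_cast; ring_nf
      _ ≤ _ := this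
  · rw [key]
    have := mul_le_mul_of_nonneg_right hsum_up hts
    calc (∑ i ∈ Finset.range (m + 1), t ^ i * s ^ (m - i)) * (t - s) ≤ ((m + 1 : ℝ) * t ^ m) * (t - s) := this
      _ = (↑(m+1) : ℝ) * t ^ (m + 1 - 1) * (t - s) := by push_cast; ring_nf

/-- If `q_n ∈ (0,1)`, `q_n → 0` and `n q_n^{α−1} L(q_n) → 1/(α−1)`, then
`n (1 − ∑_{k≥1} k ρ(k) (1−q_n)^{k−1}) → α/(α−1)` as `n → ∞`. -/
theorem stmt_16 (ρ : ℕ → ℝ) (hρ0 : ∀ k, 0 ≤ ρ k) (hρsum : ∑' k : ℕ, ρ k = 1)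
    (hmean : ∑' k : ℕ, (k : ℝ) * ρ k = 1) (hρ1 : ρ 1 ≠ 1)
    (α : ℝ) (hα1 : 1 < α) (hα2 : α ≤ 2) (L : ℝ → ℝ)
    (hL : ∀ x ∈ Set.Ioo (0 : ℝ) 1,
      L x = ((∑' k : ℕ, ρ k * (1 - x) ^ k) - (1 - x)) / x ^ α)
    (hslow : ∀ c : ℝ, 0 < c →
      Filter.Tendsto (fun x : ℝ => L (c * x) / L x) (nhdsWithin 0 (Set.Ioi 0)) (nhds 1))
    (q : ℕ → ℝ) (hq : ∀ n, 1 ≤ n → q n ∈ Set.Ioo (0 : ℝ) 1)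
    (hq0 : Filter.Tendsto q Filter.atTop (nhds 0))
    (hqL : Filter.Tendsto (fun n : ℕ => (n : ℝ) * q n ^ (α - 1) * L (q n))
      Filter.atTop (nhds (1 / (α - 1)))) :
    Filter.Tendsto
      (fun n : ℕ => (n : ℝ) * (1 - ∑' k : ℕ, (k : ℝ) * ρ k * (1 - q n) ^ (k - 1)))
      Filter.atTop (nhds (α / (α - 1))) := by
  have hSρ : Summable ρ := by
    by_contra h
    rw [tsum_eq_zero_of_not_summable h] at hρsum
    norm_num at hρsum
  have hSk : Summable (fun k : ℕ => (k : ℝ) * ρ k) := by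
    by_contra h
    rw [tsum_eq_zero_of_not_summable h] at hmean
    norm_num at hmean
  have hSF : ∀ s : ℝ, 0 ≤ s → s ≤ 1 → Summable (fun k : ℕ => ρ k * s ^ k) := by
    intro s hs hs1
    refine Summable.of_nonneg_of_le (fun k => mul_nonneg (hρ0 k) (pow_nonneg hs k))
      (fun k => mul_le_of_le_one_right (hρ0 k) (pow_le_one₀ hs hs1)) hSρ
  have hSD : ∀ s : ℝ, 0 ≤ s → s ≤ 1 → Summable (fun k : ℕ => (k : ℝ) * ρ k * s ^ (k - 1)) := by
    intro s hs hs1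
    refine Summable.of_nonneg_of_le
      (fun k => mul_nonneg (mul_nonneg (Nat.cast_nonneg k) (hρ0 k)) (pow_nonneg hs _))
      (fun k => mul_le_of_le_one_right (mul_nonneg (Nat.cast_nonneg k) (hρ0 k)) (pow_le_one₀ hs hs1)) hSk
  -- secant bounds
  have hA : ∀ s t : ℝ, 0 ≤ s → s ≤ t → t ≤ 1 →
      (∑' k : ℕ, (k : ℝ) * ρ k * s ^ (k - 1)) * (t - s)
        ≤ (∑' k : ℕ, ρ k * t ^ k) - (∑' k : ℕ, ρ k * s ^ k) ∧
      (∑' k : ℕ, ρ k * t ^ k) - (∑' k : ℕ, ρ k * s ^ k)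
        ≤ (∑' k : ℕ, (k : ℝ) * ρ k * t ^ (k - 1)) * (t - s) := by
    intro s t hs hst ht1
    have ht : 0 ≤ t := hs.trans hst
    have hs1 : s ≤ 1 := hst.trans ht1
    have hsub : (∑' k : ℕ, ρ k * t ^ k) - (∑' k : ℕ, ρ k * s ^ k)
        = ∑' k : ℕ, (ρ k * t ^ k - ρ k * s ^ k) :=
      (Summable.tsum_sub (hSF t ht ht1) (hSF s hs hs1)).symm
    have hSmid : Summable (fun k : ℕ => ρ k * t ^ k - ρ k * s ^ k) :=
      (hSF t ht ht1).sub (hSF s hs hs1)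
    constructor
    · rw [hsub, ← tsum_mul_right]
      refine Summable.tsum_le_tsum (fun k => ?_) ((hSD s hs hs1).mul_right _) hSmid
      have h1 := (pow_bounds hs hst k).1
      have h2 := mul_le_mul_of_nonneg_left h1 (hρ0 k)
      calc (k : ℝ) * ρ k * s ^ (k - 1) * (t - s)
          = ρ k * ((k : ℝ) * s ^ (k - 1) * (t - s)) := by ring
        _ ≤ ρ k * (t ^ k - s ^ k) := h2
        _ = ρ k * t ^ k - ρ k * s ^ k := by ring
    · rw [hsub, ← tsum_mul_right]
      refine Summable.tsum_le_tsum (fun k => ?_) hSmid ((hSD t ht ht1).mul_right _)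
      have h1 := (pow_bounds hs hst k).2
      have h2 := mul_le_mul_of_nonneg_left h1 (hρ0 k)
      calc ρ k * t ^ k - ρ k * s ^ k = ρ k * (t ^ k - s ^ k) := by ring
        _ ≤ ρ k * ((k : ℝ) * t ^ (k - 1) * (t - s)) := h2
        _ = (k : ℝ) * ρ k * t ^ (k - 1) * (t - s) := by ring
  -- strict: F s > s for s ∈ [0,1)
  have hk0 : ∃ k : ℕ, 2 ≤ k ∧ 0 < ρ k := by
    by_contra h
    push_neg at h
    have hz : ∀ k : ℕ, 2 ≤ k → ρ k = 0 := fun k hk => le_antisymm (h k hk) (hρ0 k)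
    have : ∑' k : ℕ, (k : ℝ) * ρ k = ((1:ℕ) : ℝ) * ρ 1 := by
      refine tsum_eq_single 1 (fun k hk => ?_)
      rcases Nat.lt_or_ge k 2 with h2 | h2
      · interval_cases k
        · simp
        · exact absurd rfl hk
      · simp [hz k h2]
    rw [hmean] at this
    simp at this
    exact hρ1 this.symm
  have hFgt : ∀ s : ℝ, 0 ≤ s → s < 1 → s < ∑' k : ℕ, ρ k * s ^ k := by
    intro s hs hs1
    obtain ⟨k₀, hk₀2, hk₀⟩ := hk0
    have hstrict : 1 - s ^ k₀ < (k₀ : ℝ) * (1 - s) := by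
      have hgeom : (1 - s) * (∑ i ∈ Finset.range k₀, s ^ i) = 1 - s ^ k₀ := by
        have := geom_sum_mul s k₀
        nlinarith [this]
      have hsumlt : (∑ i ∈ Finset.range k₀, s ^ i) < (k₀ : ℝ) := by
        calc (∑ i ∈ Finset.range k₀, s ^ i) < ∑ _i ∈ Finset.range k₀, (1 : ℝ) := by
              refine Finset.sum_lt_sum (fun i _ => pow_le_one₀ hs hs1.le) ⟨1, Finset.mem_range.2 (by omega), by simpa using hs1⟩
          _ = (k₀ : ℝ) := by simp
      nlinarith [sub_pos.2 hs1]
    -- 1 - F s = ∑' ρk (1 - s^k) < ∑' k ρk (1-s) = 1-s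
    have hhigh : ∑' k : ℕ, (k : ℝ) * ρ k * (1 - s) = 1 - s := by
      rw [tsum_mul_right, hmean, one_mul]
    have hsub : 1 - (∑' k : ℕ, ρ k * s ^ k) = ∑' k : ℕ, (ρ k - ρ k * s ^ k) := by
      rw [← hρsum]
      exact (Summable.tsum_sub hSρ (hSF s hs hs1.le)).symm
    have hlt : (∑' k : ℕ, (ρ k - ρ k * s ^ k)) < ∑' k : ℕ, (k : ℝ) * ρ k * (1 - s) := by
      refine Summable.tsum_lt_tsum (i := k₀) (fun k => ?_) ?_ (hSρ.sub (hSF s hs hs1.le)) (hSk.mul_right _)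
      · have h1 := (pow_bounds hs hs1.le k).2
        simp only [one_pow] at h1
        nlinarith [hρ0 k, h1]
      · have hb : ρ k₀ * (1 - s ^ k₀) < ρ k₀ * ((k₀ : ℝ) * (1 - s)) :=
          mul_lt_mul_of_pos_left hstrict hk₀
        nlinarith [hb]
    rw [hhigh] at hlt
    linarith [hsub, hlt]
  have hU : ∀ x ∈ Ioo (0:ℝ) 1, (∑' k : ℕ, ρ k * (1 - x) ^ k) = x ^ α * L x + (1 - x) := by
    intro x hx
    have hxα : (0:ℝ) < x ^ α := rpow_pos_of_pos hx.1 α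
    rw [hL x hx, mul_div_cancel₀ _ (ne_of_gt hxα)]
    ring
  have hLpos : ∀ x ∈ Ioo (0:ℝ) 1, 0 < L x := by
    intro x hx
    rw [hL x hx]
    refine div_pos (sub_pos.2 ?_) (rpow_pos_of_pos hx.1 α)
    exact hFgt (1 - x) (by linarith [hx.2]) (by linarith [hx.1])
  have hRtend : Filter.Tendsto (fun x : ℝ =>
      (1 - ∑' k : ℕ, (k : ℝ) * ρ k * (1 - x) ^ (k - 1)) / (x ^ (α - 1) * L x))
      (nhdsWithin 0 (Set.Ioi 0)) (nhds α) := by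
    set E : ℝ → ℝ → ℝ := fun c x => ((c*x) ^ α * L (c*x) - x ^ α * L x) / ((c - 1) * x) with hE
    have hub : ∀ c : ℝ, 1 < c → ∀ x : ℝ, 0 < x → c * x < 1 →
        1 - (∑' k : ℕ, (k : ℝ) * ρ k * (1 - x) ^ (k - 1)) ≤ E c x := by
      intro c hc x hx hcx
      have hx1 : x < 1 := lt_trans (by nlinarith) hcx
      have h1 := (hA (1 - c*x) (1 - x) (by linarith) (by nlinarith) (by linarith)).2
      rw [hU x ⟨hx, hx1⟩] at h1
      rw [show (1:ℝ) - c*x = 1 - (c*x) from rfl, hU (c*x) ⟨by positivity, hcx⟩] at h1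
      have hpos : (0:ℝ) < (c - 1) * x := by nlinarith
      rw [hE]
      rw [le_div_iff₀ hpos]
      nlinarith [h1]
    have hlb : ∀ c : ℝ, 0 < c → c < 1 → ∀ x : ℝ, 0 < x → x < 1 →
        E c x ≤ 1 - (∑' k : ℕ, (k : ℝ) * ρ k * (1 - x) ^ (k - 1)) := by
      intro c hc hc1 x hx hx1
      have h1 := (hA (1 - x) (1 - c*x) (by linarith) (by nlinarith) (by nlinarith)).1
      rw [hU x ⟨hx, hx1⟩] at h1
      rw [show (1:ℝ) - c*x = 1 - (c*x) from rfl, hU (c*x) ⟨by positivity, by nlinarith⟩] at h1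
      have hneg : (c - 1) * x < 0 := by nlinarith
      rw [hE, div_le_iff_of_neg hneg]
      nlinarith [h1]
    have hEratio : ∀ c : ℝ, 0 < c → c ≠ 1 → ∀ x : ℝ, x ∈ Ioo (0:ℝ) 1 →
        E c x / (x ^ (α - 1) * L x) = (c ^ α * (L (c*x) / L x) - 1) / (c - 1) := by
      intro c hc hc1 x hx
      have hxpos := hx.1
      have hLx : L x ≠ 0 := ne_of_gt (hLpos x hx)
      have hxα : x ^ α = x ^ (α - 1) * x := by
        nth_rewrite 1 [show α = (α - 1) + 1 by ring]
        rw [Real.rpow_add hxpos, Real.rpow_one]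
      have hcxα : (c * x) ^ α = c ^ α * x ^ α := Real.mul_rpow hc.le hxpos.le
      have hxam : x ^ (α - 1) ≠ 0 := ne_of_gt (rpow_pos_of_pos hxpos (α - 1))
      have hc1' : c - 1 ≠ 0 := sub_ne_zero.2 hc1
      have hden : (c - 1) * x * (x ^ (α - 1) * L x) ≠ 0 :=
        mul_ne_zero (mul_ne_zero hc1' hxpos.ne') (mul_ne_zero hxam hLx)
      rw [hE]
      simp only
      rw [div_div, div_eq_div_iff hden hc1', hcxα, hxα]
      field_simp
    -- slope limit
    have hslope : Tendsto (fun t : ℝ => (t ^ α - 1) / (t - 1)) (nhdsWithin 1 {(1:ℝ)}ᶜ) (nhds α) := by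
      have hd : HasDerivAt (fun t : ℝ => t ^ α) α 1 := by
        have := Real.hasDerivAt_rpow_const (x := (1:ℝ)) (p := α) (Or.inl one_ne_zero)
        simpa using this
      have := hasDerivAt_iff_tendsto_slope.mp hd
      refine this.congr (fun t => ?_)
      simp [slope, Real.one_rpow]
      ring_nf
    have hx1ev : ∀ᶠ x in nhdsWithin (0:ℝ) (Ioi 0), x < 1 :=
      eventually_nhdsWithin_of_eventually_nhds (eventually_lt_nhds (by norm_num))
    have hx0ev : ∀ᶠ x in nhdsWithin (0:ℝ) (Ioi 0), (0:ℝ) < x := eventually_mem_nhdsWithin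
    rw [tendsto_order]
    constructor
    · intro a ha
      have h2 : ∀ᶠ t in nhdsWithin 1 (Iio 1), a < (t ^ α - 1) / (t - 1) :=
        (hslope.eventually (eventually_gt_nhds ha)).filter_mono
          (nhdsWithin_mono 1 (fun t ht => ne_of_lt ht))
      have h3 : ∀ᶠ t in nhdsWithin 1 (Iio 1), (0:ℝ) < t :=
        eventually_nhdsWithin_of_eventually_nhds (eventually_gt_nhds (by norm_num))
      have h4 : ∀ᶠ t in nhdsWithin (1:ℝ) (Iio 1), t < 1 := eventually_mem_nhdsWithin
      obtain ⟨μ, hμa, hμ0, hμ1⟩ := (h2.and (h3.and h4)).exists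
      have hEq : ∀ᶠ x in nhdsWithin (0:ℝ) (Ioi 0),
          (μ ^ α * (L (μ*x) / L x) - 1) / (μ - 1) = E μ x / (x ^ (α-1) * L x) := by
        filter_upwards [hx1ev, hx0ev] with x h1 h0
        exact (hEratio μ hμ0 (ne_of_lt hμ1) x ⟨h0, h1⟩).symm
      have hlim : Tendsto (fun x => E μ x / (x ^ (α-1) * L x)) (nhdsWithin (0:ℝ) (Ioi 0))
          (nhds ((μ ^ α * 1 - 1) / (μ - 1))) := by
        refine Tendsto.congr' hEq ?_
        exact (((hslow μ hμ0).const_mul (μ^α)).sub_const 1).div_const (μ-1)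
      rw [mul_one] at hlim
      have h5 : ∀ᶠ x in nhdsWithin (0:ℝ) (Ioi 0), a < E μ x / (x ^ (α-1) * L x) :=
        hlim.eventually (eventually_gt_nhds hμa)
      filter_upwards [h5, hx1ev, hx0ev] with x h5x h1 h0
      have hden : 0 < x ^ (α-1) * L x :=
        mul_pos (rpow_pos_of_pos h0 _) (hLpos x ⟨h0, h1⟩)
      exact lt_of_lt_of_le h5x ((div_le_div_iff_of_pos_right hden).2 (hlb μ hμ0 hμ1 x h0 h1))
    · intro b hb
      have h2 : ∀ᶠ t in nhdsWithin 1 (Ioi 1), (t ^ α - 1) / (t - 1) < b :=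
        (hslope.eventually (eventually_lt_nhds hb)).filter_mono
          (nhdsWithin_mono 1 (fun t ht => ne_of_gt ht))
      have h4 : ∀ᶠ t in nhdsWithin (1:ℝ) (Ioi 1), 1 < t := eventually_mem_nhdsWithin
      obtain ⟨lam, hlamb, hlam1⟩ := (h2.and h4).exists
      have hlam0 : (0:ℝ) < lam := lt_trans one_pos hlam1
      have hxsmall : ∀ᶠ x in nhdsWithin (0:ℝ) (Ioi 0), x < 1/lam :=
        eventually_nhdsWithin_of_eventually_nhds (eventually_lt_nhds (by positivity))
      have hEq : ∀ᶠ x in nhdsWithin (0:ℝ) (Ioi 0),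
          (lam ^ α * (L (lam*x) / L x) - 1) / (lam - 1) = E lam x / (x ^ (α-1) * L x) := by
        filter_upwards [hx1ev, hx0ev] with x h1 h0
        exact (hEratio lam hlam0 (ne_of_gt hlam1) x ⟨h0, h1⟩).symm
      have hlim : Tendsto (fun x => E lam x / (x ^ (α-1) * L x)) (nhdsWithin (0:ℝ) (Ioi 0))
          (nhds ((lam ^ α * 1 - 1) / (lam - 1))) := by
        refine Tendsto.congr' hEq ?_
        exact (((hslow lam hlam0).const_mul (lam^α)).sub_const 1).div_const (lam-1)
      rw [mul_one] at hlim
      have h5 : ∀ᶠ x in nhdsWithin (0:ℝ) (Ioi 0), E lam x / (x ^ (α-1) * L x) < b :=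
        hlim.eventually (eventually_lt_nhds hlamb)
      filter_upwards [h5, hx1ev, hx0ev, hxsmall] with x h5x h1 h0 hsm
      have hden : 0 < x ^ (α-1) * L x :=
        mul_pos (rpow_pos_of_pos h0 _) (hLpos x ⟨h0, h1⟩)
      have hclt : lam * x < 1 := by
        have := mul_lt_mul_of_pos_left hsm hlam0
        rwa [mul_one_div, div_self (ne_of_gt hlam0)] at this
      exact lt_of_le_of_lt ((div_le_div_iff_of_pos_right hden).2 (hub lam hlam1 x h0 hclt)) h5x
  have hql : Filter.Tendsto q Filter.atTop (nhdsWithin (0:ℝ) (Ioi 0)) := by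
    rw [tendsto_nhdsWithin_iff]
    exact ⟨hq0, Filter.eventually_atTop.2 ⟨1, fun n hn => (hq n hn).1⟩⟩
  have hcomp := hRtend.comp hql
  have hfinal := hqL.mul hcomp
  have hval : 1 / (α - 1) * α = α / (α - 1) := by ring
  rw [hval] at hfinal
  refine hfinal.congr' ?_
  filter_upwards [Filter.eventually_ge_atTop 1] with n hn
  obtain ⟨h0, h1⟩ := hq n hn
  have hden : q n ^ (α-1) * L (q n) ≠ 0 :=
    ne_of_gt (mul_pos (rpow_pos_of_pos h0 _) (hLpos (q n) ⟨h0, h1⟩))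
  simp only [Function.comp]
  rw [show (n:ℝ) * q n ^ (α-1) * L (q n) = (n:ℝ) * (q n ^ (α-1) * L (q n)) by ring,
    mul_assoc, mul_comm (q n ^ (α-1) * L (q n)), div_mul_cancel₀ _ hden]
end

section
/- Define g(s) := ∑_{k=1}^∞ k·ρ(k)·s^{k−1} for s ∈ [0,1]. Then for every fixed r ∈ (0,1), one has (g(1 − x(1−r)) − g(1−x))/(1 − g(1−x)) → 1 − (1−r)^{α−1} as x → 0⁺ (the denominator being nonzero for all sufficiently small x > 0). -/
open scoped BigOperators
open Filter Set Topology

section Aux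
variable (ρ : ℕ → ℝ)

lemma aux_summable1 (hρ0 : ∀ k, 0 ≤ ρ k) (hS1 : Summable (fun k : ℕ => (k:ℝ) * ρ k))
    {s : ℝ} (hs : |s| ≤ 1) : Summable (fun k : ℕ => (k:ℝ) * ρ k * s ^ (k-1)) := by
  apply hS1.of_norm_bounded
  intro k
  calc ‖(k:ℝ) * ρ k * s ^ (k-1)‖ = (k:ℝ) * ρ k * |s| ^ (k-1) := by
        rw [Real.norm_eq_abs, abs_mul, abs_mul, Nat.abs_cast, abs_of_nonneg (hρ0 k), abs_pow]
    _ ≤ (k:ℝ) * ρ k * 1 := by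
        exact mul_le_mul_of_nonneg_left (pow_le_one₀ (abs_nonneg s) hs)
          (mul_nonneg (Nat.cast_nonneg k) (hρ0 k))
    _ = (k:ℝ) * ρ k := mul_one _

lemma aux_summable0 (hρ0 : ∀ k, 0 ≤ ρ k) (hS : Summable ρ)
    {s : ℝ} (hs : |s| ≤ 1) : Summable (fun k : ℕ => ρ k * s ^ k) := by
  apply hS.of_norm_bounded
  intro k
  calc ‖ρ k * s ^ k‖ = ρ k * |s| ^ k := by
        rw [Real.norm_eq_abs, abs_mul, abs_of_nonneg (hρ0 k), abs_pow]
    _ ≤ ρ k * 1 := mul_le_mul_of_nonneg_left (pow_le_one₀ (abs_nonneg s) hs) (hρ0 k)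
    _ = ρ k := mul_one _

lemma aux_deriv (hρ0 : ∀ k, 0 ≤ ρ k) (hS : Summable ρ)
    (hS1 : Summable (fun k : ℕ => (k:ℝ) * ρ k)) {s : ℝ} (hs : s ∈ Set.Ioo (-1:ℝ) 1) :
    HasDerivAt (fun t => ∑' k : ℕ, ρ k * t ^ k) (∑' k : ℕ, (k:ℝ) * ρ k * s ^ (k-1)) s := by
  apply hasDerivAt_tsum_of_isPreconnected hS1 (isOpen_Ioo (a := (-1:ℝ)) (b := 1))
    (isPreconnected_Ioo) (g' := fun (k : ℕ) (y : ℝ) => (k:ℝ) * ρ k * y ^ (k-1))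
    (y₀ := 0) ?_ ?_ (by norm_num) ?_ hs
  · intro n y _
    have := (hasDerivAt_pow n y).const_mul (ρ n)
    convert this using 1
    rfl
    ring
  · intro n y hy
    have hy1 : |y| ≤ 1 := by
      rw [abs_le]; exact ⟨hy.1.le, hy.2.le⟩
    calc ‖(n:ℝ) * ρ n * y ^ (n-1)‖ = (n:ℝ) * ρ n * |y| ^ (n-1) := by
          rw [Real.norm_eq_abs, abs_mul, abs_mul, Nat.abs_cast, abs_of_nonneg (hρ0 n), abs_pow]
      _ ≤ (n:ℝ) * ρ n * 1 := mul_le_mul_of_nonneg_left (pow_le_one₀ (abs_nonneg y) hy1)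
          (mul_nonneg (Nat.cast_nonneg n) (hρ0 n))
      _ = (n:ℝ) * ρ n := mul_one _
  · exact aux_summable0 ρ hρ0 hS (by norm_num)

end Aux

section Aux2
variable (ρ : ℕ → ℝ)

lemma aux_k0 (hρ0 : ∀ k, 0 ≤ ρ k) (hρ1 : ρ 1 ≠ 1)
    (hmean : ∑' k : ℕ, (k : ℝ) * ρ k = 1) : ∃ k₀ : ℕ, 2 ≤ k₀ ∧ 0 < ρ k₀ := by
  by_contra h
  push_neg at h
  apply hρ1
  have h1 : ∑' k : ℕ, (k : ℝ) * ρ k = (1:ℕ) * ρ 1 := by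
    apply tsum_eq_single
    intro b hb
    match b, hb with
    | 0, _ => simp
    | 1, hb => exact absurd rfl hb
    | (n+2), _ =>
      have : ρ (n+2) = 0 := le_antisymm (h _ (by omega)) (hρ0 _)
      simp [this]
  rw [h1] at hmean
  simpa using hmean
end Aux2

section Aux3
variable (ρ : ℕ → ℝ)

lemma aux_mono (hρ0 : ∀ k, 0 ≤ ρ k) (hS1 : Summable (fun k : ℕ => (k:ℝ) * ρ k))
    {s t : ℝ} (hs0 : 0 ≤ s) (hst : s ≤ t) (ht : t ≤ 1) :
    ∑' k : ℕ, (k:ℝ) * ρ k * s ^ (k-1) ≤ ∑' k : ℕ, (k:ℝ) * ρ k * t ^ (k-1) := by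
  have ht0 : 0 ≤ t := hs0.trans hst
  apply Summable.tsum_le_tsum _ (aux_summable1 ρ hρ0 hS1 (by rw [abs_of_nonneg hs0]; exact hst.trans ht))
    (aux_summable1 ρ hρ0 hS1 (by rw [abs_of_nonneg ht0]; exact ht))
  intro k
  exact mul_le_mul_of_nonneg_left (pow_le_pow_left₀ hs0 hst _)
    (mul_nonneg (Nat.cast_nonneg k) (hρ0 k))

lemma aux_glt (hρ0 : ∀ k, 0 ≤ ρ k) (hS1 : Summable (fun k : ℕ => (k:ℝ) * ρ k))
    (hmean : ∑' k : ℕ, (k : ℝ) * ρ k = 1) {k₀ : ℕ} (hk₀ : 2 ≤ k₀) (hρk₀ : 0 < ρ k₀)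
    {s : ℝ} (hs0 : 0 ≤ s) (hs1 : s < 1) :
    ∑' k : ℕ, (k:ℝ) * ρ k * s ^ (k-1) < 1 := by
  have hSs : Summable (fun k : ℕ => (k:ℝ) * ρ k * s ^ (k-1)) :=
    aux_summable1 ρ hρ0 hS1 (by rw [abs_of_nonneg hs0]; exact hs1.le)
  have hsub : Summable (fun k : ℕ => (k:ℝ) * ρ k - (k:ℝ) * ρ k * s ^ (k-1)) := hS1.sub hSs
  have hkey : 0 < ∑' k : ℕ, ((k:ℝ) * ρ k - (k:ℝ) * ρ k * s ^ (k-1)) := by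
    have hterm : 0 < (k₀:ℝ) * ρ k₀ - (k₀:ℝ) * ρ k₀ * s ^ (k₀-1) := by
      have hlt : s ^ (k₀-1) < 1 := pow_lt_one₀ hs0 hs1 (by omega)
      have hpos : 0 < (k₀:ℝ) * ρ k₀ := by positivity
      nlinarith
    refine lt_of_lt_of_le hterm (Summable.le_tsum hsub k₀ ?_)
    intro i _
    have : s ^ (i-1) ≤ 1 := pow_le_one₀ hs0 hs1.le
    have h0 : 0 ≤ (i:ℝ) * ρ i := mul_nonneg (Nat.cast_nonneg i) (hρ0 i)
    nlinarith
  rw [Summable.tsum_sub hS1 hSs, hmean] at hkey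
  linarith

end Aux3

lemma aux_Mbound (ρ : ℕ → ℝ) (hρ0 : ∀ k, 0 ≤ ρ k) (hS : Summable ρ)
    (hS1 : Summable (fun k : ℕ => (k:ℝ) * ρ k))
    (hρsum : ∑' k : ℕ, ρ k = 1) (hmean : ∑' k : ℕ, (k : ℝ) * ρ k = 1)
    {t : ℝ} (ht0 : 0 ≤ t) (ht1 : t ≤ 1) :
    |(∑' k : ℕ, ρ k * (1-t) ^ k) - (1-t)| ≤ 2*t := by
  have h01 : (0:ℝ) ≤ 1 - t := by linarith
  have h11 : |1 - t| ≤ 1 := by rw [abs_of_nonneg h01]; linarith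
  have hS0 : Summable (fun k : ℕ => ρ k * (1-t) ^ k) := aux_summable0 ρ hρ0 hS h11
  have key : |(∑' k : ℕ, ρ k * (1-t) ^ k) - 1| ≤ t := by
    have hdiff : (∑' k : ℕ, ρ k * (1-t) ^ k) - 1
        = ∑' k : ℕ, (ρ k * (1-t) ^ k - ρ k) := by
      rw [Summable.tsum_sub hS0 hS, hρsum]
    have htermb : ∀ k : ℕ, ‖ρ k * (1-t) ^ k - ρ k‖ ≤ (k:ℝ) * ρ k * t := by
      intro k
      have hple : (1-t) ^ k ≤ 1 := pow_le_one₀ h01 (by linarith)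
      have hbern : 1 - (k:ℝ) * t ≤ (1-t) ^ k := by
        have := one_add_mul_le_pow (a := -t) (by linarith) k
        calc 1 - (k:ℝ)*t = 1 + (k:ℝ)*(-t) := by ring
          _ ≤ (1 + -t) ^ k := this
          _ = (1-t) ^ k := by ring_nf
      have : |ρ k * (1-t) ^ k - ρ k| = ρ k * (1 - (1-t)^k) := by
        rw [abs_of_nonpos (by nlinarith [hρ0 k])]; ring
      rw [Real.norm_eq_abs, this]
      have h2 : 1 - (1-t)^k ≤ (k:ℝ) * t := by linarith
      calc ρ k * (1 - (1-t)^k) ≤ ρ k * ((k:ℝ)*t) :=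
            mul_le_mul_of_nonneg_left h2 (hρ0 k)
        _ = (k:ℝ) * ρ k * t := by ring
    have hsum2 : Summable (fun k : ℕ => (k:ℝ) * ρ k * t) := hS1.mul_right t
    have hfn : Summable (fun k : ℕ => ‖ρ k * (1-t) ^ k - ρ k‖) :=
      hsum2.of_nonneg_of_le (fun k => norm_nonneg _) htermb
    calc |(∑' k : ℕ, ρ k * (1-t) ^ k) - 1| = ‖∑' k : ℕ, (ρ k * (1-t) ^ k - ρ k)‖ := by
          rw [hdiff, Real.norm_eq_abs]
      _ ≤ ∑' k : ℕ, ‖ρ k * (1-t) ^ k - ρ k‖ :=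
          norm_tsum_le_tsum_norm hfn
      _ ≤ ∑' k : ℕ, (k:ℝ) * ρ k * t := Summable.tsum_le_tsum htermb hfn hsum2
      _ = t := by rw [tsum_mul_right, hmean, one_mul]
  calc |(∑' k : ℕ, ρ k * (1-t) ^ k) - (1-t)|
      = |((∑' k : ℕ, ρ k * (1-t) ^ k) - 1) + t| := by
        congr 1; ring
    _ ≤ |(∑' k : ℕ, ρ k * (1-t) ^ k) - 1| + |t| := abs_add_le _ _
    _ ≤ t + t := add_le_add key (by rw [abs_of_nonneg ht0])
    _ = 2*t := by ring

set_option maxHeartbeats 1000000 in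
/-- Let `g(s) = ∑_{k≥1} k ρ(k) s^{k−1}`. For fixed `r ∈ (0,1)`, the conditional
generating function `(g(1 − x(1−r)) − g(1−x))/(1 − g(1−x))` tends to
`1 − (1−r)^{α−1}` as `x → 0⁺`, the denominator being nonzero for all small `x > 0`. -/
theorem stmt_18 (ρ : ℕ → ℝ) (hρ0 : ∀ k, 0 ≤ ρ k) (hρsum : ∑' k : ℕ, ρ k = 1)
    (hmean : ∑' k : ℕ, (k : ℝ) * ρ k = 1) (hρ1 : ρ 1 ≠ 1)
    (α : ℝ) (hα1 : 1 < α) (hα2 : α ≤ 2) (L : ℝ → ℝ)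
    (hL : ∀ x ∈ Set.Ioo (0 : ℝ) 1,
      L x = ((∑' k : ℕ, ρ k * (1 - x) ^ k) - (1 - x)) / x ^ α)
    (hslow : ∀ c : ℝ, 0 < c →
      Filter.Tendsto (fun x : ℝ => L (c * x) / L x) (nhdsWithin 0 (Set.Ioi 0)) (nhds 1))
    (g : ℝ → ℝ) (hg : ∀ s, g s = ∑' k : ℕ, (k : ℝ) * ρ k * s ^ (k - 1))
    (r : ℝ) (hr0 : 0 < r) (hr1 : r < 1) :
    (∀ᶠ x in nhdsWithin (0 : ℝ) (Set.Ioi 0), 1 - g (1 - x) ≠ 0) ∧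
    Filter.Tendsto (fun x : ℝ => (g (1 - x * (1 - r)) - g (1 - x)) / (1 - g (1 - x)))
      (nhdsWithin 0 (Set.Ioi 0)) (nhds (1 - (1 - r) ^ (α - 1))) := by
  have hS : Summable ρ := by
    by_contra h; rw [tsum_eq_zero_of_not_summable h] at hρsum; norm_num at hρsum
  have hS1 : Summable (fun k : ℕ => (k:ℝ) * ρ k) := by
    by_contra h; rw [tsum_eq_zero_of_not_summable h] at hmean; norm_num at hmean
  obtain ⟨k₀, hk₀, hρk₀⟩ := aux_k0 ρ hρ0 hρ1 hmean
  set l : Filter ℝ := nhdsWithin (0:ℝ) (Set.Ioi 0) with hldef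
  obtain ⟨c, hcdef⟩ : ∃ c : ℝ, c = 1 - r := ⟨_, rfl⟩
  rw [← hcdef]
  have hc0 : 0 < c := by rw [hcdef]; linarith
  have hc1 : c < 1 := by rw [hcdef]; linarith
  obtain ⟨M, hMdef⟩ : ∃ M : ℝ → ℝ, M = fun y => (∑' k : ℕ, ρ k * (1-y) ^ k) - (1-y) := ⟨_, rfl⟩
  obtain ⟨D, hDdef⟩ : ∃ D : ℝ → ℝ, D = fun y => 1 - g (1-y) := ⟨_, rfl⟩
  have hI01 : Set.Ioo (0:ℝ) 1 ∈ l := Ioo_mem_nhdsGT_of_mem ⟨le_refl 0, one_pos⟩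
  -- derivative of M
  have hMder : ∀ x ∈ Set.Ioo (0:ℝ) 2, HasDerivAt M (D x) x := by
    intro x hx
    have h1x : (1-x) ∈ Set.Ioo (-1:ℝ) 1 := ⟨by linarith [hx.2], by linarith [hx.1]⟩
    have hd := aux_deriv ρ hρ0 hS hS1 h1x
    have hinner : HasDerivAt (fun y : ℝ => 1 - y) (-1 : ℝ) x := by
      simpa using (hasDerivAt_id x).const_sub 1
    have hcomp := hd.comp x hinner
    have h2 : HasDerivAt (fun y : ℝ => (∑' k : ℕ, ρ k * (1-y) ^ k) - (1-y))
        ((∑' k : ℕ, (k:ℝ)*ρ k*(1-x)^(k-1)) * (-1) - (-1)) x := hcomp.sub hinner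
    have heq : (∑' k : ℕ, (k:ℝ)*ρ k*(1-x)^(k-1)) * (-1) - (-1) = D x := by
      simp only [hDdef, hg]; ring
    rw [heq] at h2
    rw [hMdef]
    exact h2
  -- positivity & monotonicity of D
  have hDpos : ∀ x : ℝ, 0 < x → x ≤ 1 → 0 < D x := by
    intro x hx hx1
    have := aux_glt ρ hρ0 hS1 hmean hk₀ hρk₀ (s := 1-x) (by linarith) (by linarith)
    simp only [hDdef, hg]
    linarith
  have hDmono : ∀ x y : ℝ, 0 < x → x ≤ y → y ≤ 1 → D x ≤ D y := by
    intro x y hx hxy hy1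
    have := aux_mono ρ hρ0 hS1 (s := 1-y) (t := 1-x) (by linarith) (by linarith) (by linarith)
    simp only [hDdef, hg]
    linarith
  -- M at 0, bound, continuity
  have hM0 : M 0 = 0 := by
    simp only [hMdef]
    norm_num [hρsum]
  have hMbd : ∀ t : ℝ, 0 ≤ t → t ≤ 1 → |M t| ≤ 2*t := by
    intro t ht0 ht1
    rw [hMdef]
    exact aux_Mbound ρ hρ0 hS hS1 hρsum hmean ht0 ht1
  have hMcont : ∀ x : ℝ, 0 < x → x ≤ 1 → ContinuousOn M (Set.Icc 0 x) := by
    intro x hx hx1 t ht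
    rcases eq_or_lt_of_le ht.1 with h0 | h0
    · rw [← h0]
      unfold ContinuousWithinAt
      rw [hM0]
      apply squeeze_zero_norm' (a := fun u => 2*u)
      · filter_upwards [eventually_mem_nhdsWithin] with u hu
        exact hMbd u hu.1 (hu.2.trans hx1)
      · have : Tendsto (fun u : ℝ => 2*u) (𝓝 0) (𝓝 (2*0)) :=
          (continuous_const.mul continuous_id).tendsto 0
        simpa using this.mono_left nhdsWithin_le_nhds
    · exact ((hMder t ⟨h0, by linarith [ht.2]⟩).continuousAt).continuousWithinAt
  -- MVT
  have hMVT : ∀ a b : ℝ, 0 < a → a < b → b ≤ 1 →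
      ∃ ξ ∈ Set.Ioo a b, D ξ = (M b - M a)/(b - a) := by
    intro a b ha hab hb1
    apply exists_hasDerivAt_eq_slope M D hab
    · apply (hMcont b (ha.trans hab) hb1).mono
      exact Set.Icc_subset_Icc ha.le (le_refl b)
    · intro t ht
      exact hMder t ⟨ha.trans ht.1, by linarith [ht.2]⟩
  -- M positive
  have hMpos : ∀ x : ℝ, 0 < x → x < 1 → 0 < M x := by
    intro x hx hx1
    obtain ⟨ξ, hξ, hslope⟩ := exists_hasDerivAt_eq_slope M D hx (hMcont x hx hx1.le)
      (fun t ht => hMder t ⟨ht.1, by linarith [ht.2]⟩)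
    have hDξ : 0 < D ξ := hDpos ξ hξ.1 (by linarith [hξ.2])
    rw [hM0, sub_zero, sub_zero] at hslope
    have hMx : M x = x * D ξ := by
      rw [hslope]; field_simp
    rw [hMx]; positivity
  -- M = x^α L x
  have hMeq : ∀ x ∈ Set.Ioo (0:ℝ) 1, M x = x ^ α * L x := by
    intro x hx
    have hxα : (x:ℝ) ^ α ≠ 0 := (Real.rpow_pos_of_pos hx.1 α).ne'
    rw [hL x hx]
    simp only [hMdef]
    field_simp
  -- ratio limit for M
  have hMratio : ∀ cc : ℝ, 0 < cc → Tendsto (fun x => M (cc*x) / M x) l (𝓝 (cc ^ α)) := by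
    intro cc hcc
    have hmem : Set.Ioo (0:ℝ) (min 1 cc⁻¹) ∈ l :=
      Ioo_mem_nhdsGT_of_mem ⟨le_refl 0, lt_min one_pos (inv_pos.mpr hcc)⟩
    have hev : ∀ᶠ x in l, cc ^ α * (L (cc*x) / L x) = M (cc*x)/M x := by
      filter_upwards [hmem] with x hx
      have hx1 : x ∈ Set.Ioo (0:ℝ) 1 := ⟨hx.1, lt_of_lt_of_le hx.2 (min_le_left _ _)⟩
      have hcx : cc*x ∈ Set.Ioo (0:ℝ) 1 := by
        constructor
        · exact mul_pos hcc hx.1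
        · have h2 : x < cc⁻¹ := lt_of_lt_of_le hx.2 (min_le_right _ _)
          calc cc * x < cc * cc⁻¹ := by
                exact mul_lt_mul_of_pos_left h2 hcc
            _ = 1 := mul_inv_cancel₀ hcc.ne'
      have hxα : (x:ℝ) ^ α ≠ 0 := (Real.rpow_pos_of_pos hx.1 α).ne'
      have hLx : L x ≠ 0 := by
        intro h0
        have := hMeq x hx1
        rw [h0, mul_zero] at this
        exact (hMpos x hx1.1 hx1.2).ne' this
      rw [hMeq x hx1, hMeq (cc*x) hcx, Real.mul_rpow hcc.le hx.1.le]
      field_simp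
    have h1 : Tendsto (fun x => cc ^ α * (L (cc*x) / L x)) l (𝓝 (cc ^ α * 1)) :=
      (hslow cc hcc).const_mul _
    rw [mul_one] at h1
    exact h1.congr' hev
  -- the key limit: x D x / M x → α
  obtain ⟨T, hTdef⟩ : ∃ T : ℝ → ℝ, T = fun x => x * D x / M x := ⟨_, rfl⟩
  have hTlim : Tendsto T l (𝓝 α) := by
    rw [Metric.tendsto_nhds]
    intro ε hε
    have hφ : HasDerivAt (fun t : ℝ => t ^ α) α 1 := by
      have := Real.hasDerivAt_rpow_const (x := 1) (p := α) (Or.inl one_ne_zero)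
      simpa using this
    have hsl : Tendsto (slope (fun t : ℝ => t ^ α) 1) (𝓝[≠] 1) (𝓝 α) :=
      hasDerivAt_iff_tendsto_slope.1 hφ
    have hslr : Tendsto (fun lam : ℝ => slope (fun t : ℝ => t ^ α) 1 lam) (𝓝[>] 1) (𝓝 α) :=
      hsl.mono_left (nhdsWithin_mono 1 (fun y hy => ne_of_gt hy))
    have hinv : Tendsto (fun lam : ℝ => lam⁻¹) (𝓝[>] (1:ℝ)) (𝓝[≠] 1) := by
      apply tendsto_nhdsWithin_of_tendsto_nhds_of_eventually_within
      · have h2 : Tendsto (fun lam : ℝ => lam⁻¹) (𝓝 (1:ℝ)) (𝓝 ((1:ℝ)⁻¹)) :=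
          (continuousAt_inv₀ one_ne_zero).tendsto
        rw [inv_one] at h2
        exact h2.mono_left nhdsWithin_le_nhds
      · filter_upwards [self_mem_nhdsWithin] with lam hlam
        exact ne_of_lt (inv_lt_one_of_one_lt₀ hlam)
    have hsli : Tendsto (fun lam : ℝ => slope (fun t : ℝ => t ^ α) 1 lam⁻¹) (𝓝[>] 1) (𝓝 α) :=
      hsl.comp hinv
    have hεpos : 0 < ε/2 := by linarith
    have hev : ∀ᶠ lam : ℝ in 𝓝[>] 1,
        |slope (fun t : ℝ => t ^ α) 1 lam - α| < ε/2 ∧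
        |slope (fun t : ℝ => t ^ α) 1 lam⁻¹ - α| < ε/2 ∧ 1 < lam := by
      have e1 := Metric.tendsto_nhds.1 hslr (ε/2) hεpos
      have e2 := Metric.tendsto_nhds.1 hsli (ε/2) hεpos
      filter_upwards [e1, e2, self_mem_nhdsWithin] with lam h1 h2 h3
      exact ⟨by rwa [Real.dist_eq] at h1, by rwa [Real.dist_eq] at h2, h3⟩
    obtain ⟨lam, hA, hB, hlam1⟩ := hev.exists
    have hlampos : (0:ℝ) < lam := lt_trans one_pos hlam1
    have hl1 : (0:ℝ) < lam - 1 := by linarith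
    have hil1 : (0:ℝ) < 1 - lam⁻¹ := by
      have := inv_lt_one_of_one_lt₀ hlam1; linarith
    have hinvpos : (0:ℝ) < lam⁻¹ := inv_pos.mpr hlampos
    have hAval : slope (fun t : ℝ => t ^ α) 1 lam = (lam ^ α - 1)/(lam - 1) := by
      rw [slope_def_field, Real.one_rpow]
    have hBval : slope (fun t : ℝ => t ^ α) 1 lam⁻¹ = ((lam⁻¹) ^ α - 1)/(lam⁻¹ - 1) := by
      rw [slope_def_field, Real.one_rpow]
    rw [hAval] at hA
    rw [hBval] at hB
    have hmemx : Set.Ioo (0:ℝ) lam⁻¹ ∈ l := Ioo_mem_nhdsGT_of_mem ⟨le_refl 0, hinvpos⟩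
    have e2 := Metric.tendsto_nhds.1 (hMratio lam hlampos) (ε/2*(lam-1)) (by positivity)
    have e3 := Metric.tendsto_nhds.1 (hMratio lam⁻¹ hinvpos) (ε/2*(1-lam⁻¹)) (by positivity)
    filter_upwards [hmemx, e2, e3] with x hx he2 he3
    rw [Real.dist_eq] at he2 he3
    have hx0 : 0 < x := hx.1
    have hx1 : x < 1 := lt_trans hx.2 (by linarith)
    have hlx1 : lam * x < 1 := by
      calc lam * x < lam * lam⁻¹ := mul_lt_mul_of_pos_left hx.2 hlampos
        _ = 1 := mul_inv_cancel₀ hlampos.ne'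
    have hP : 0 < M x := hMpos x hx0 hx1
    have hDx : 0 < D x := hDpos x hx0 hx1.le
    -- upper bound via MVT on [x, lam x]
    have hub : T x ≤ (M (lam*x)/M x - 1)/(lam - 1) := by
      obtain ⟨ξ, hξ, hslope⟩ := hMVT x (lam*x) hx0
        (by nlinarith [hx0, hlam1]) hlx1.le
      have hDxξ : D x ≤ D ξ := hDmono x ξ hx0 hξ.1.le (by linarith [hξ.2])
      rw [hslope] at hDxξ
      have hd : lam*x - x = (lam-1)*x := by ring
      rw [hd] at hDxξ
      have hprodpos : (0:ℝ) < (lam-1)*x := by positivity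
      have h1 : D x * ((lam-1)*x) ≤ M (lam*x) - M x := by
        rw [le_div_iff₀ hprodpos] at hDxξ
        linarith
      simp only [hTdef]
      rw [div_le_div_iff₀ hP hl1]
      have h3 : (M (lam*x)/M x - 1)*M x = M (lam*x) - M x := by
        field_simp
      rw [h3]
      calc x * D x * (lam - 1) = D x * ((lam-1)*x) := by ring
        _ ≤ M (lam*x) - M x := h1
    -- lower bound via MVT on [lam⁻¹ x, x]
    have hlb : (1 - M (lam⁻¹*x)/M x)/(1 - lam⁻¹) ≤ T x := by
      obtain ⟨ξ, hξ, hslope⟩ := hMVT (lam⁻¹*x) x (mul_pos hinvpos hx0)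
        (by nlinarith [hx0, hil1]) hx1.le
      have hDξx : D ξ ≤ D x := hDmono ξ x (lt_trans (mul_pos hinvpos hx0) hξ.1) hξ.2.le hx1.le
      rw [hslope] at hDξx
      have hd : x - lam⁻¹*x = (1-lam⁻¹)*x := by ring
      rw [hd] at hDξx
      have hprodpos : (0:ℝ) < (1-lam⁻¹)*x := by positivity
      have h1 : M x - M (lam⁻¹*x) ≤ D x * ((1-lam⁻¹)*x) := by
        rw [div_le_iff₀ hprodpos] at hDξx
        linarith
      simp only [hTdef]
      rw [div_le_div_iff₀ hil1 hP]
      have h3 : (1 - M (lam⁻¹*x)/M x)*M x = M x - M (lam⁻¹*x) := by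
        field_simp
      rw [h3]
      calc M x - M (lam⁻¹*x) ≤ D x * ((1-lam⁻¹)*x) := h1
        _ = x * D x * (1 - lam⁻¹) := by ring
    -- numeric conclusion
    have habsA := abs_lt.1 hA
    have habsB := abs_lt.1 hB
    have habs2 := abs_lt.1 he2
    have habs3 := abs_lt.1 he3
    have hAmul : (lam ^ α - 1)/(lam - 1) * (lam - 1) = lam ^ α - 1 :=
      div_mul_cancel₀ _ hl1.ne'
    have hBmul : ((lam⁻¹) ^ α - 1)/(lam⁻¹ - 1) * (lam⁻¹ - 1) = (lam⁻¹) ^ α - 1 :=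
      div_mul_cancel₀ _ (by linarith : lam⁻¹ - 1 < 0).ne
    rw [Real.dist_eq, abs_lt]
    have hBmul2 : ((lam⁻¹) ^ α - 1)/(lam⁻¹ - 1) * (1 - lam⁻¹) = 1 - (lam⁻¹) ^ α := by
      linear_combination (-1 : ℝ) * hBmul
    have key1 : (α - ε/2)*(1 - lam⁻¹) < 1 - (lam⁻¹) ^ α := by
      calc (α - ε/2)*(1 - lam⁻¹)
          < ((lam⁻¹) ^ α - 1)/(lam⁻¹ - 1) * (1 - lam⁻¹) :=
            mul_lt_mul_of_pos_right (by linarith [habsB.1]) hil1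
        _ = 1 - (lam⁻¹) ^ α := hBmul2
    have key1' : lam ^ α - 1 < (α + ε/2)*(lam - 1) := by
      calc lam ^ α - 1 = (lam ^ α - 1)/(lam - 1) * (lam - 1) := hAmul.symm
        _ < (α + ε/2)*(lam - 1) := mul_lt_mul_of_pos_right (by linarith [habsA.2]) hl1
    constructor
    · have key3 : α - ε < (1 - M (lam⁻¹*x)/M x)/(1 - lam⁻¹) := by
        rw [lt_div_iff₀ hil1]
        nlinarith [habs3.2, key1]
      linarith [hlb, key3]
    · have hup2 : (M (lam*x)/M x - 1)/(lam - 1) < α + ε := by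
        rw [div_lt_iff₀ hl1]
        nlinarith [habs2.2, key1']
      linarith [hub]
  -- first conjunct
  have hne : ∀ᶠ x in l, 1 - g (1-x) ≠ 0 := by
    filter_upwards [hI01] with x hx
    have := hDpos x hx.1 hx.2.le
    simp only [hDdef] at this
    linarith
  refine ⟨hne, ?_⟩
  have hcomp : Tendsto (fun x : ℝ => c * x) l l := by
    apply tendsto_nhdsWithin_of_tendsto_nhds_of_eventually_within
    · have h2 : Tendsto (fun x : ℝ => c * x) (𝓝 0) (𝓝 (c*0)) :=
        (continuous_const.mul continuous_id).tendsto 0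
      rw [mul_zero] at h2
      exact h2.mono_left nhdsWithin_le_nhds
    · filter_upwards [self_mem_nhdsWithin] with x hx
      exact mul_pos hc0 hx
  have hTc : Tendsto (fun x => T (c*x)) l (𝓝 α) := hTlim.comp hcomp
  have hMc := hMratio c hc0
  have hDratio : Tendsto (fun x => D (c*x) / D x) l (𝓝 (c ^ (α - 1))) := by
    have hev : ∀ᶠ x in l, (T (c*x)/T x) * (M (c*x)/M x) * c⁻¹ = D (c*x)/D x := by
      filter_upwards [hI01] with x hx
      have hcx : c*x ∈ Set.Ioo (0:ℝ) 1 := by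
        constructor
        · exact mul_pos hc0 hx.1
        · calc c*x < 1*x := mul_lt_mul_of_pos_right hc1 hx.1
            _ = x := one_mul x
            _ < 1 := hx.2
      have hPx := hMpos x hx.1 hx.2
      have hPcx := hMpos (c*x) hcx.1 hcx.2
      have hDx := hDpos x hx.1 hx.2.le
      have hxne : x ≠ 0 := hx.1.ne'
      have hcne : c ≠ 0 := hc0.ne'
      have hDxne : D x ≠ 0 := hDx.ne'
      simp only [hTdef]
      rw [div_div_div_comm, div_mul_cancel₀ _ (div_ne_zero hPcx.ne' hPx.ne')]
      field_simp
    have h1 : Tendsto (fun x => T (c*x)/T x) l (𝓝 1) := by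
      have h2 := hTc.div hTlim (by linarith : α ≠ 0)
      have h3 : α / α = 1 := div_self (by linarith : α ≠ 0)
      rwa [h3] at h2
    have h4 : Tendsto (fun x => (T (c*x)/T x) * (M (c*x)/M x) * c⁻¹) l
        (𝓝 (1 * c ^ α * c⁻¹)) := (h1.mul hMc).mul_const c⁻¹
    have h5 : 1 * c ^ α * c⁻¹ = c ^ (α - 1) := by
      rw [one_mul, Real.rpow_sub hc0, Real.rpow_one, div_eq_mul_inv]
    rw [h5] at h4
    exact h4.congr' hev
  have hfin : ∀ᶠ x in l, 1 - D (c*x)/D x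
      = (g (1 - x * c) - g (1 - x)) / (1 - g (1 - x)) := by
    filter_upwards [hI01] with x hx
    have hDx := hDpos x hx.1 hx.2.le
    have hnum : g (1 - x*c) - g (1-x) = D x - D (c*x) := by
      simp only [hDdef, mul_comm x c]
      ring
    rw [hnum]
    have hDx2 : 1 - g (1-x) = D x := by simp only [hDdef]
    rw [hDx2, sub_div, div_self hDx.ne']
  exact (tendsto_const_nhds.sub hDratio).congr' hfin
end

section
/- Let s ∈ (0,1) and M > 0, and let F : ℝ → ℝ be a function that is nonincreasing on [0,∞) with 0 ≤ F(x) ≤ 1 for all x ≥ 0. If ∫₀^∞ F(x)·θ·e^{−θx} dx ≤ M·(1−e^{−θ})^s for every θ > 0, then F(x) ≤ (M/(1−e^{−1}))·x^{−s} for every x > 0. -/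
open MeasureTheory

/-- Tauberian-type estimate: if `F : ℝ → ℝ` is nonincreasing on `[0,∞)` with values in
`[0,1]` and `∫₀^∞ F(x) θ e^{−θx} dx ≤ M (1−e^{−θ})^s` for every `θ > 0`, then
`F(x) ≤ (M/(1−e^{−1})) x^{−s}` for every `x > 0`. -/
theorem stmt_19 (s M : ℝ) (hs0 : 0 < s) (hs1 : s < 1) (hM : 0 < M) (F : ℝ → ℝ)
    (hanti : AntitoneOn F (Set.Ici 0))
    (hF0 : ∀ x, 0 ≤ x → 0 ≤ F x) (hF1 : ∀ x, 0 ≤ x → F x ≤ 1)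
    (hLap : ∀ θ : ℝ, 0 < θ →
      (∫ x in Set.Ioi (0 : ℝ), F x * (θ * Real.exp (-θ * x)))
        ≤ M * (1 - Real.exp (-θ)) ^ s) :
    ∀ x : ℝ, 0 < x → F x ≤ (M / (1 - Real.exp (-1))) * x ^ (-s) := by
  intro x hx
  set θ : ℝ := x⁻¹ with hθdef
  have hθ : 0 < θ := inv_pos.mpr hx
  have he1 : Real.exp (-1) < 1 := Real.exp_lt_one_iff.mpr (by norm_num)
  have hpos1 : (0:ℝ) < 1 - Real.exp (-1) := by linarith
  -- measurability of F on Ioi 0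
  have hmeas : AEMeasurable F (volume.restrict (Set.Ioi (0:ℝ))) := by
    have := aemeasurable_restrict_of_antitoneOn (μ := volume) measurableSet_Ici hanti
    exact this.mono_measure (Measure.restrict_mono Set.Ioi_subset_Ici_self le_rfl)
  -- the integrand and its integrability
  set g : ℝ → ℝ := fun t => F t * (θ * Real.exp (-θ * t)) with hg
  have hgnonneg : ∀ t ∈ Set.Ioi (0:ℝ), 0 ≤ g t := fun t ht => by
    have := hF0 t (le_of_lt ht)
    positivity
  have hexp_int : IntegrableOn (fun t => θ * Real.exp (-θ * t)) (Set.Ioi (0:ℝ)) := by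
    have : IntegrableOn (fun t => Real.exp (-θ * t)) (Set.Ioi (0:ℝ)) := by
      simpa [neg_mul, mul_comm] using exp_neg_integrableOn_Ioi (0:ℝ) hθ
    exact this.const_mul θ
  have hgint : IntegrableOn g (Set.Ioi (0:ℝ)) := by
    refine Integrable.mono' hexp_int ?_ ?_
    · have h2 : AEMeasurable (fun t => θ * Real.exp (-θ * t))
          (volume.restrict (Set.Ioi (0:ℝ))) := by fun_prop
      exact (hmeas.mul h2).aestronglyMeasurable
    · filter_upwards [self_mem_ae_restrict (measurableSet_Ioi)] with t ht
      have h0 := hF0 t (le_of_lt ht)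
      have h1 := hF1 t (le_of_lt ht)
      have hepos : 0 < Real.exp (-θ * t) := Real.exp_pos _
      rw [Real.norm_eq_abs, abs_of_nonneg (by positivity)]
      exact mul_le_of_le_one_left (by positivity) h1
  -- lower bound: restrict to Ioc 0 x
  have hsub : ∫ t in Set.Ioc (0:ℝ) x, g t ≤ ∫ t in Set.Ioi (0:ℝ), g t := by
    apply setIntegral_mono_set hgint
    · filter_upwards [self_mem_ae_restrict (measurableSet_Ioi)] with t ht using hgnonneg t ht
    · exact Filter.Eventually.of_forall (fun t ht => ht.1)
  have hmono : ∫ t in Set.Ioc (0:ℝ) x, F x * (θ * Real.exp (-θ * t))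
      ≤ ∫ t in Set.Ioc (0:ℝ) x, g t := by
    apply setIntegral_mono_on
    · exact ((hexp_int.mono_set Set.Ioc_subset_Ioi_self).const_mul (F x))
    · exact hgint.mono_set Set.Ioc_subset_Ioi_self
    · exact measurableSet_Ioc
    · intro t ht
      have hFle : F x ≤ F t := hanti (le_of_lt ht.1) (le_of_lt (lt_of_lt_of_le ht.1 ht.2)) ht.2
      have : (0:ℝ) ≤ θ * Real.exp (-θ * t) := by positivity
      exact mul_le_mul_of_nonneg_right hFle this
  -- compute the model integral
  have hcomp : ∫ t in Set.Ioc (0:ℝ) x, F x * (θ * Real.exp (-θ * t))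
      = F x * (1 - Real.exp (-1)) := by
    rw [← intervalIntegral.integral_of_le (le_of_lt hx)]
    rw [intervalIntegral.integral_const_mul]
    have hder : ∀ t ∈ Set.uIcc (0:ℝ) x,
        HasDerivAt (fun t : ℝ => -Real.exp (-θ * t)) (θ * Real.exp (-θ * t)) t := by
      intro t _
      have h1 : HasDerivAt (fun t : ℝ => -θ * t) (-θ) t := by
        simpa using (hasDerivAt_id t).const_mul (-θ)
      have h2 := (Real.hasDerivAt_exp (-θ * t)).comp t h1
      simpa [mul_comm, Function.comp_def, Pi.neg_def] using h2.neg
    have h := intervalIntegral.integral_eq_sub_of_hasDerivAt hder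
      (Continuous.intervalIntegrable (by continuity) 0 x)
    rw [h]
    have hθx1 : θ * x = 1 := by rw [hθdef]; exact inv_mul_cancel₀ (ne_of_gt hx)
    have : -θ * x = -1 := by rw [neg_mul, hθx1]
    rw [this]
    simp only [mul_zero, neg_zero, Real.exp_zero]
    ring
  -- upper bound: 1 - e^{-θ} ≤ θ
  have hθub : (1 : ℝ) - Real.exp (-θ) ≤ θ := by
    have := Real.add_one_le_exp (-θ); linarith
  have hθlb : (0:ℝ) ≤ 1 - Real.exp (-θ) := by
    have : Real.exp (-θ) ≤ 1 := Real.exp_le_one_iff.mpr (by linarith)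
    linarith
  have hrpow : (1 - Real.exp (-θ)) ^ s ≤ θ ^ s :=
    Real.rpow_le_rpow hθlb hθub (le_of_lt hs0)
  have hθs : θ ^ s = x ^ (-s) := by
    rw [hθdef, Real.inv_rpow (le_of_lt hx), ← Real.rpow_neg (le_of_lt hx)]
  -- combine
  have hchain : F x * (1 - Real.exp (-1)) ≤ M * x ^ (-s) := by
    calc F x * (1 - Real.exp (-1)) = ∫ t in Set.Ioc (0:ℝ) x, F x * (θ * Real.exp (-θ * t)) :=
          hcomp.symm
      _ ≤ ∫ t in Set.Ioc (0:ℝ) x, g t := hmono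
      _ ≤ ∫ t in Set.Ioi (0:ℝ), g t := hsub
      _ ≤ M * (1 - Real.exp (-θ)) ^ s := hLap θ hθ
      _ ≤ M * θ ^ s := by nlinarith
      _ = M * x ^ (-s) := by rw [hθs]
  rw [div_mul_eq_mul_div, le_div_iff₀ hpos1]
  linarith
end
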